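/- arXiv:0903.5033 — 15 statements merged into one kernel-verified Lean document; each statement's English description precedes it below -/
import Mathlib

section
/- Let T be an integral domain with maximal ideal M, φ : T → T/M = K the quotient map, D a subring of K, and R = φ⁻¹(D) the pullback. If T is local, then T is well-centered on R. -/
/-- Pullback `R = φ⁻¹(D)` of a local domain `T` modulo a maximal ideal `M`:
`T` is well-centered on `R`. -/
theorem pullback_local_wellCentered
    (T : Type*) [CommRing T] [IsDomain T] [IsLocalRing T]
    (M : Ideal T) (hM : M.IsMaximal)
    (D : Subring (T ⧸ M))
    (R : Subring T) (hR : R = Subring.comap (Ideal.Quotient.mk M) D)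
    (hRT : R ≠ ⊤) :
    ∀ b : T, ∃ u : Tˣ, (u : T) * b ∈ R := by
  intro b
  by_cases hb : b ∈ M
  · refine ⟨1, ?_⟩
    rw [hR]
    simp only [Subring.mem_comap, Units.val_one, one_mul]
    rw [show Ideal.Quotient.mk M b = 0 from (Ideal.Quotient.eq_zero_iff_mem).mpr hb]
    exact D.zero_mem
  · have hMeq : M = IsLocalRing.maximalIdeal T := IsLocalRing.eq_maximalIdeal hM
    have hu : IsUnit b := by
      by_contra h
      exact hb (hMeq ▸ (IsLocalRing.mem_maximalIdeal b).mpr h)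
    refine ⟨hu.unit⁻¹, ?_⟩
    rw [hu.val_inv_mul]
    exact R.one_mem
end

section
/- Let T be an integral domain with maximal ideal M, φ : T → K = T/M the quotient map, D a subring of K with quotient field k, and R = φ⁻¹(D). If every intermediate ring S with R ⊆ S ⊆ T is well-centered on R, then every element of K is algebraic over k. -/
/-- Pullback `R = φ⁻¹(D)` of a domain `T` modulo a maximal ideal `M`, with `k` the quotient
field of `D` inside `K = T/M`: if every intermediate ring `R ⊆ S ⊆ T` is well-centered on `R`,
then every element of `K` is algebraic over `k`. -/
theorem pullback_all_intermediate_wellCentered_implies_algebraic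
    (T : Type*) [CommRing T] [IsDomain T]
    (M : Ideal T) [hM : M.IsMaximal]
    (D : Subring (T ⧸ M))
    (R : Subring T) (hR : R = Subring.comap (Ideal.Quotient.mk M) D)
    (hRT : R ≠ ⊤)
    (hwc : ∀ S : Subring T, R ≤ S →
      ∀ b : S, ∃ u : Sˣ, (((u : S) * b : S) : T) ∈ R) :
    letI : Field (T ⧸ M) := Ideal.Quotient.field M
    ∀ x : T ⧸ M, IsAlgebraic (Subfield.closure (D : Set (T ⧸ M))) x := by
  letI : Field (T ⧸ M) := Ideal.Quotient.field M
  intro x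
  by_contra hx
  set k : Subfield (T ⧸ M) := Subfield.closure (D : Set (T ⧸ M)) with hk
  have hx' : Transcendental k x := hx
  have hinj : Function.Injective (Polynomial.aeval x : Polynomial k →ₐ[k] (T ⧸ M)) :=
    transcendental_iff_injective.mp hx'
  obtain ⟨t, ht⟩ := Ideal.Quotient.mk_surjective x
  set φ := Ideal.Quotient.mk M with hφ
  set S : Subring T := Subring.closure (insert t (R : Set T)) with hS
  have hRS : R ≤ S := fun r hr => Subring.subset_closure (Set.mem_insert_of_mem _ hr)
  have htS : t ∈ S := Subring.subset_closure (Set.mem_insert _ _)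
  obtain ⟨u, hu⟩ := hwc S hRS ⟨t, htS⟩
  -- every element of S maps into the adjoin of x over k
  have hmapS : ∀ s : T, s ∈ S → φ s ∈ Algebra.adjoin k {x} := by
    have hle : S ≤ (Algebra.adjoin k {x}).toSubring.comap φ := by
      rw [hS]
      apply Subring.closure_le.mpr
      rintro y hy
      rcases hy with rfl | hy
      · show φ y ∈ Algebra.adjoin k {x}
        rw [ht]
        exact Algebra.self_mem_adjoin_singleton k x
      · show φ y ∈ Algebra.adjoin k {x}
        have hyD : φ y ∈ D := by rw [hR] at hy; exact hy
        have hyk : φ y ∈ k := Subfield.subset_closure hyD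
        exact (Algebra.adjoin k {x}).algebraMap_mem ⟨φ y, hyk⟩
    intro s hs
    exact hle hs
  have hu1 : φ ((u : S) : T) ∈ Algebra.adjoin k {x} := hmapS _ (u : S).2
  have hu2 : φ (((u⁻¹ : Sˣ) : S) : T) ∈ Algebra.adjoin k {x} := hmapS _ ((u⁻¹ : Sˣ) : S).2
  rw [Algebra.adjoin_singleton_eq_range_aeval] at hu1 hu2
  obtain ⟨p, hp'⟩ := hu1
  obtain ⟨q, hq'⟩ := hu2
  have hp : Polynomial.aeval x p = φ ((u : S) : T) := hp'
  have hq : Polynomial.aeval x q = φ (((u⁻¹ : Sˣ) : S) : T) := hq'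
  have hmul : φ ((u : S) : T) * φ (((u⁻¹ : Sˣ) : S) : T) = 1 := by
    rw [← map_mul, ← Subring.coe_mul, ← Units.val_mul, mul_inv_cancel u]
    simp
  have hpq : p * q = 1 := by
    apply hinj
    rw [map_mul, hp, hq, hmul, map_one]
  have hpu : IsUnit p := IsUnit.of_mul_eq_one q hpq
  obtain ⟨c, hcu, hcp⟩ := Polynomial.isUnit_iff.mp hpu
  -- φ u = ↑c
  have hφu : φ ((u : S) : T) = (c : T ⧸ M) := by
    rw [← hp, ← hcp, Polynomial.aeval_C]
    rfl
  -- φ u * x ∈ k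
  have hmem : φ (((u : S) * ⟨t, htS⟩ : S) : T) ∈ D := by
    rw [hR] at hu; exact hu
  have hux : (c : T ⧸ M) * x ∈ k := by
    have : φ (((u : S) * ⟨t, htS⟩ : S) : T) = (c : T ⧸ M) * x := by
      rw [Subring.coe_mul, map_mul, hφu, ht]
    rw [this] at hmem
    exact Subfield.subset_closure hmem
  -- c ≠ 0
  have hc0 : c ≠ 0 := by
    rintro rfl
    rw [Subfield.coe_zero] at hφu
    rw [hφu, zero_mul] at hmul
    exact zero_ne_one hmul
  -- x ∈ k
  have hxk : x ∈ k := by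
    have : x = ((c⁻¹ : k) : T ⧸ M) * ((c : T ⧸ M) * x) := by
      rw [← mul_assoc]
      norm_cast
      rw [inv_mul_cancel₀ hc0]
      simp
    rw [this]
    exact k.mul_mem (c⁻¹ : k).2 hux
  exact hx (isAlgebraic_algebraMap (⟨x, hxk⟩ : k))
end

section
/- Let T be a local integral domain with maximal ideal M, φ : T → K = T/M the quotient map, k a subfield of K, and R = φ⁻¹(k). Then every intermediate ring S with R ⊆ S ⊆ T is well-centered on R if and only if K is algebraic over k. -/
/-- Pullback `R = φ⁻¹(k)` of a local domain `T` modulo its maximal ideal `M`, with `k` a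
subfield of `K = T/M`: every intermediate ring `R ⊆ S ⊆ T` is well-centered on `R` iff `K`
is algebraic over `k`. -/
theorem pullback_all_intermediate_wellCentered_iff_algebraic
    (T : Type*) [CommRing T] [IsDomain T] [IsLocalRing T]
    (M : Ideal T) [hM : M.IsMaximal]
    (R : Subring T) (hRT : R ≠ ⊤) :
    letI : Field (T ⧸ M) := Ideal.Quotient.field M
    ∀ k : Subfield (T ⧸ M), R = Subring.comap (Ideal.Quotient.mk M) k.toSubring →
    ((∀ S : Subring T, R ≤ S → ∀ b : S, ∃ u : Sˣ, (((u : S) * b : S) : T) ∈ R) ↔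
      (∀ x : T ⧸ M, IsAlgebraic k x)) := by
  letI : Field (T ⧸ M) := Ideal.Quotient.field M
  intro k hk
  set φ := Ideal.Quotient.mk M with hφ
  have memR : ∀ t : T, t ∈ R ↔ φ t ∈ k := by
    intro t; rw [hk]; rfl
  have hsurj : Function.Surjective φ := Ideal.Quotient.mk_surjective
  have hrange : Set.range (algebraMap k (T ⧸ M)) = (k : Set (T ⧸ M)) := by
    ext c
    constructor
    · rintro ⟨a, rfl⟩; exact a.2
    · intro hc; exact ⟨⟨c, hc⟩, rfl⟩
  constructor
  · -- well-centered for all S → algebraic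
    intro h x
    by_contra hx
    obtain ⟨b, hb⟩ := hsurj x
    set S := Subring.closure ((R : Set T) ∪ {b}) with hS
    have hRS : R ≤ S := fun t ht => Subring.subset_closure (Or.inl ht)
    have hbS : b ∈ S := Subring.subset_closure (Or.inr rfl)
    obtain ⟨u, hu⟩ := h S hRS ⟨b, hbS⟩
    -- image of S under φ
    have himg : ∀ s : S, φ (s : T) ∈ Algebra.adjoin k {x} := by
      intro s
      have : (s : T) ∈ S := s.2
      have hmap : φ (s : T) ∈ Subring.closure (φ '' ((R : Set T) ∪ {b})) := by
        rw [← RingHom.map_closure]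
        exact ⟨s, this, rfl⟩
      have hle : Subring.closure (φ '' ((R : Set T) ∪ {b}))
          ≤ (Algebra.adjoin k {x}).toSubring := by
        rw [Algebra.adjoin_eq_ring_closure, hrange]
        apply Subring.closure_mono
        rintro c ⟨t, ht | ht, rfl⟩
        · exact Or.inl ((memR t).1 ht)
        · simp only [Set.mem_singleton_iff] at ht
          subst ht; rw [hb]; exact Or.inr rfl
      exact hle hmap
    have hinj : Function.Injective (Polynomial.aeval x : Polynomial k →ₐ[k] (T ⧸ M)) :=
      (transcendental_iff_injective).mp hx
    -- φ(u) and φ(u⁻¹) lie in k[x]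
    obtain ⟨p, hp⟩ : ∃ p : Polynomial k, Polynomial.aeval x p = φ ((u : S) : T) := by
      have := himg (u : S)
      rw [Algebra.adjoin_singleton_eq_range_aeval] at this
      exact this
    obtain ⟨q, hq⟩ : ∃ q : Polynomial k, Polynomial.aeval x q = φ (((u⁻¹ : Sˣ) : S) : T) := by
      have := himg ((u⁻¹ : Sˣ) : S)
      rw [Algebra.adjoin_singleton_eq_range_aeval] at this
      exact this
    have hmul : φ ((u : S) : T) * φ (((u⁻¹ : Sˣ) : S) : T) = 1 := by
      rw [← map_mul, ← Subring.coe_mul, ← Units.val_mul, mul_inv_cancel, Units.val_one,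
        Subring.coe_one, map_one]
    have hpq : p * q = 1 := by
      apply hinj
      rw [map_mul, hp, hq, hmul, map_one]
    obtain ⟨a, ha, hap⟩ := Polynomial.isUnit_iff.mp (IsUnit.of_mul_eq_one (a := p) q hpq)
    have hγ : φ ((u : S) : T) = algebraMap k (T ⧸ M) a := by
      rw [← hp, ← hap, Polynomial.aeval_C]
    have ha0 : (a : k) ≠ 0 := ha.ne_zero
    -- φ(u * b) ∈ k
    have hux : φ ((u : S) : T) * x ∈ k := by
      have h1 : ((((u : S) * ⟨b, hbS⟩ : S) : T)) = ((u : S) : T) * b := rfl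
      have h2 := (memR _).1 hu
      rw [h1, map_mul, hb] at h2
      exact h2
    -- hence x ∈ k
    have hxk : x ∈ k := by
      have : x = (algebraMap k (T ⧸ M) a)⁻¹ * (φ ((u : S) : T) * x) := by
        rw [hγ, ← mul_assoc, inv_mul_cancel₀, one_mul]
        intro h0
        exact ha0 ((algebraMap k (T ⧸ M)).injective (by rw [h0, map_zero]))
      rw [this, ← map_inv₀]
      exact k.mul_mem (a⁻¹ : k).2 hux
    exact hx (isAlgebraic_algebraMap (⟨x, hxk⟩ : k))
  · -- algebraic → well-centered
    intro halg S hRS b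
    by_cases hbM : (b : T) ∈ M
    · refine ⟨1, ?_⟩
      have : (b : T) ∈ R := (memR _).2 (by
        rw [Ideal.Quotient.eq_zero_iff_mem.mpr hbM]; exact k.zero_mem)
      simpa using this
    · set β := φ (b : T) with hβ
      have hβ0 : β ≠ 0 := fun h0 => hbM (Ideal.Quotient.eq_zero_iff_mem.mp h0)
      have hint : IsIntegral k β := (halg β).isIntegral
      have hinv : β⁻¹ ∈ Algebra.adjoin k {β} := hint.inv_mem_adjoin
      have hsub : (Algebra.adjoin k {β}).toSubring ≤ S.map φ := by
        rw [Algebra.adjoin_eq_ring_closure, hrange]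
        apply Subring.closure_le.2
        rintro c (hc | hc)
        · obtain ⟨t, ht⟩ := hsurj c
          refine ⟨t, hRS ((memR t).2 ?_), ht⟩
          rw [ht]; exact hc
        · simp only [Set.mem_singleton_iff] at hc
          subst hc; exact ⟨b, b.2, rfl⟩
      obtain ⟨t, htS, htφ⟩ := hsub hinv
      have h1 : φ (t * (b : T)) = 1 := by
        rw [map_mul, htφ, ← hβ, inv_mul_cancel₀ hβ0]
      have hunit : IsUnit (t * (b : T)) := by
        by_contra hnu
        have : t * (b : T) ∈ M := by
          rw [IsLocalRing.eq_maximalIdeal hM]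
          exact hnu
        rw [Ideal.Quotient.eq_zero_iff_mem.mpr this] at h1
        exact zero_ne_one h1
      obtain ⟨v, hv⟩ := hunit
      have hφv : φ (v : T) = 1 := by rw [hv]; exact h1
      have hvinv : ((v⁻¹ : Tˣ) : T) ∈ R := by
        apply (memR _).2
        have : φ ((v⁻¹ : Tˣ) : T) * φ (v : T) = 1 := by
          rw [← map_mul, ← Units.val_mul, inv_mul_cancel, Units.val_one, map_one]
        rw [hφv, mul_one] at this
        rw [this]; exact k.one_mem
      have hsmem : t * ((v⁻¹ : Tˣ) : T) ∈ S := S.mul_mem htS (hRS hvinv)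
      have hbu : IsUnit b := by
        apply IsUnit.of_mul_eq_one (a := b) ⟨t * ((v⁻¹ : Tˣ) : T), hsmem⟩
        apply Subtype.ext
        show (b : T) * (t * ((v⁻¹ : Tˣ) : T)) = 1
        calc (b : T) * (t * ((v⁻¹ : Tˣ) : T)) = (t * (b : T)) * ((v⁻¹ : Tˣ) : T) := by ring
        _ = (v : T) * ((v⁻¹ : Tˣ) : T) := by rw [hv]
        _ = 1 := by rw [← Units.val_mul, mul_inv_cancel, Units.val_one]
      refine ⟨hbu.unit⁻¹, ?_⟩
      have h2 : ((hbu.unit⁻¹ : Sˣ) : S) * b = 1 := hbu.val_inv_mul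
      rw [h2]
      simpa using R.one_mem
end

section
/- Let T = ℚ[X], M = (X²+2)T, φ : T → T/M ≅ ℚ(√2) the quotient map, and R = φ⁻¹(ℚ). Then T is not well-centered on R; in particular there is no f ∈ R with fT = XT. -/
open Polynomial

/-- For `T = ℚ[X]`, `M = (X² + 2)T`, `R = φ⁻¹(ℚ)` (polynomials with rational image mod `M`),
`T` is not well-centered on `R`; in particular no `f ∈ R` satisfies `fT = XT`. -/
theorem Q_adjoin_sqrt2_pullback_not_wellCentered :
    ∀ M : Ideal (Polynomial ℚ), M = Ideal.span {Polynomial.X ^ 2 + 2} →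
    ∀ R : Subring (Polynomial ℚ),
      R = Subring.comap (Ideal.Quotient.mk M) (algebraMap ℚ (Polynomial ℚ ⧸ M)).range →
    (¬ ∀ b : Polynomial ℚ, ∃ f ∈ R, Ideal.span {b} = Ideal.span {f}) ∧
    ¬ ∃ f ∈ R, Ideal.span {f} = Ideal.span {(Polynomial.X : Polynomial ℚ)} := by
  intro M hM R hR
  have key : ¬ ∃ f ∈ R, Ideal.span {f} = Ideal.span {(Polynomial.X : Polynomial ℚ)} := by
    rintro ⟨f, hfR, hspan⟩
    rw [Ideal.span_singleton_eq_span_singleton] at hspan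
    obtain ⟨u, hu⟩ := hspan.symm
    obtain ⟨r, hr, hCr⟩ := Polynomial.isUnit_iff.mp u.isUnit
    have hr0 : r ≠ 0 := hr.ne_zero
    have hf : f = Polynomial.X * Polynomial.C r := by rw [hCr, hu]
    -- membership in R gives a rational q with mk f = algebraMap q
    rw [hR, Subring.mem_comap] at hfR
    obtain ⟨q, hq⟩ := hfR
    have hq' : (Ideal.Quotient.mk M) (f - Polynomial.C q) = 0 := by
      have : algebraMap ℚ (Polynomial ℚ ⧸ M) q
          = (Ideal.Quotient.mk M) (Polynomial.C q) := by
        rw [IsScalarTower.algebraMap_apply ℚ (Polynomial ℚ) (Polynomial ℚ ⧸ M),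
          Ideal.Quotient.algebraMap_eq, Polynomial.algebraMap_eq]
      rw [map_sub, sub_eq_zero, ← this, hq]
    have hmem : f - Polynomial.C q ∈ M := Ideal.Quotient.eq_zero_iff_mem.mp hq'
    rw [hM, Ideal.mem_span_singleton] at hmem
    obtain ⟨g, hg⟩ := hmem
    have hne : f - Polynomial.C q ≠ 0 := by
      intro h0
      have := congrArg (fun p => Polynomial.coeff p 1) h0
      simp [hf] at this
      exact hr0 this
    have hgne : g ≠ 0 := by
      intro h0; rw [h0, mul_zero] at hg; exact hne hg
    have hdeg2 : (Polynomial.X ^ 2 + 2 : Polynomial ℚ).natDegree = 2 := by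
      have : (2 : Polynomial ℚ) = Polynomial.C 2 := (map_ofNat Polynomial.C 2).symm
      rw [this]
      exact Polynomial.natDegree_X_pow_add_C
    have hle : (f - Polynomial.C q).natDegree ≤ 1 := by
      apply le_trans (Polynomial.natDegree_sub_le _ _)
      simp only [hf, Polynomial.natDegree_C, max_le_iff]
      refine ⟨le_trans (Polynomial.natDegree_mul_le) (by simp), by omega⟩
    have h2 : (f - Polynomial.C q).natDegree = 2 + g.natDegree := by
      rw [hg, Polynomial.natDegree_mul (by
        intro h0
        have := congrArg (fun p => Polynomial.coeff p 0) h0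
        simp at this) hgne, hdeg2]
    omega
  refine ⟨fun h => key ?_, key⟩
  obtain ⟨f, hfR, hf⟩ := h Polynomial.X
  exact ⟨f, hfR, hf.symm⟩
end

section
/- Let R be a pseudo-valuation domain with associated valuation overring V and maximal ideal M. Then every overring of R is well-centered on R if and only if V/M is algebraic over R/M. -/
/-- Let `R` be a pseudo-valuation domain with associated valuation overring `V` and maximal
ideal `M` (so `R = φ⁻¹(k)` for a subfield `k` of `K = V/M`, with `φ : V → V/M` the quotient
map).  Viewing `R` inside the common quotient field `L` of `R` and `V`, every overring of `R`
is well-centered on `R` iff `V/M` is algebraic over `R/M` (identified with `k`). -/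
theorem PVD_every_overring_wellCentered_iff_residue_algebraic
    (V : Type*) [CommRing V] [IsDomain V] [ValuationRing V]
    (M : Ideal V) [hM : M.IsMaximal] (hMmax : M = IsLocalRing.maximalIdeal V)
    (R : Subring V)
    (R' : Subring (FractionRing V))
    (hR' : R' = Subring.map (algebraMap V (FractionRing V)) R) :
    letI : Field (V ⧸ M) := Ideal.Quotient.field M
    ∀ k : Subfield (V ⧸ M), R = Subring.comap (Ideal.Quotient.mk M) k.toSubring →
    ((∀ S : Subring (FractionRing V), R' ≤ S →
        ∀ b : S, ∃ u : Sˣ, (((u : S) * b : S) : FractionRing V) ∈ R') ↔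
      (∀ x : V ⧸ M, IsAlgebraic k x)) := by
  letI : Field (V ⧸ M) := Ideal.Quotient.field M
  intro k hk
  set ι := algebraMap V (FractionRing V) with hι
  have hinj : Function.Injective ι := IsFractionRing.injective V (FractionRing V)
  set φ := Ideal.Quotient.mk M with hφ
  -- basic facts
  have hRmem : ∀ v : V, v ∈ R ↔ φ v ∈ k := by
    intro v; rw [hk]; rfl
  have hMR : ∀ m : V, m ∈ M → m ∈ R := by
    intro m hm
    rw [hRmem, show φ m = 0 from Ideal.Quotient.eq_zero_iff_mem.mpr hm]
    exact zero_mem _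
  have hφ0 : ∀ v : V, φ v = 0 ↔ v ∈ M := fun _ => Ideal.Quotient.eq_zero_iff_mem
  have hunit : ∀ v : V, v ∉ M → IsUnit v := by
    intro v hv
    by_contra h
    exact hv (hMmax ▸ (IsLocalRing.mem_maximalIdeal v).mpr h)
  constructor
  · -- well-centered for all overrings → residue field algebraic
    intro H x
    obtain ⟨v, hv⟩ := Ideal.Quotient.mk_surjective x
    set A := Algebra.adjoin k {x} with hA
    set S0 : Subring V := Subring.comap φ A.toSubring with hS0
    set S : Subring (FractionRing V) := Subring.map ι S0 with hS
    have hRS : R' ≤ S := by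
      rw [hR', hS]
      rintro y ⟨r, hrR, rfl⟩
      exact ⟨r, Subring.mem_comap.mpr (A.algebraMap_mem (⟨φ r, (hRmem r).mp hrR⟩ : k)), rfl⟩
    have hbS : ι v ∈ S := by
      exact ⟨v, Subring.mem_comap.mpr (hv ▸ Algebra.self_mem_adjoin_singleton k x), rfl⟩
    obtain ⟨u, hu⟩ := H S hRS ⟨ι v, hbS⟩
    obtain ⟨s, hsS0, hsval⟩ := Subring.mem_map.mp (u : S).2
    obtain ⟨t, htS0, htval⟩ := Subring.mem_map.mp (↑u⁻¹ : S).2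
    have hst : s * t = 1 := by
      apply hinj
      rw [map_mul, hsval, htval, map_one]
      exact_mod_cast congrArg (fun z : S => (z : FractionRing V)) (u.mul_inv)
    -- `u * b ∈ R'` gives `s * v ∈ R`
    have hsvR : s * v ∈ R := by
      rw [hR'] at hu
      obtain ⟨r, hrR, hre⟩ := hu
      have : ((((u : S) * ⟨ι v, hbS⟩ : S) : S) : FractionRing V) = ι (s * v) := by
        push_cast
        rw [map_mul, hsval]
      rw [this] at hre
      rwa [← hinj hre]
    have hφsx : φ s * x ∈ k := by
      have := (hRmem _).mp hsvR
      rwa [map_mul, hv] at this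
    have hφs0 : φ s ≠ 0 := by
      intro h0
      have : φ s * φ t = 1 := by rw [← map_mul, hst, map_one]
      rw [h0, zero_mul] at this
      exact zero_ne_one this
    -- φ s lies in adjoin k {x}, hence is a polynomial in x
    have hsA : φ s ∈ A := hsS0
    rw [hA, Algebra.adjoin_singleton_eq_range_aeval] at hsA
    obtain ⟨p, hp0⟩ := hsA
    have hp : Polynomial.aeval x p = φ s := hp0
    set c : k := ⟨φ s * x, hφsx⟩ with hc
    refine ⟨Polynomial.X * p - Polynomial.C c, ?_, ?_⟩
    · intro h0
      have hXp : Polynomial.X * p = Polynomial.C c := by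
        rwa [sub_eq_zero] at h0
      have hp0 : p ≠ 0 := by
        intro h
        rw [h, map_zero] at hp
        exact hφs0 hp.symm
      have := congrArg Polynomial.natDegree hXp
      rw [Polynomial.natDegree_C, Polynomial.natDegree_mul Polynomial.X_ne_zero hp0,
        Polynomial.natDegree_X] at this
      omega
    · rw [map_sub, map_mul, Polynomial.aeval_X, Polynomial.aeval_C, hp]
      show x * φ s - (φ s * x) = 0
      ring
  · -- residue field algebraic → every overring is well-centered
    intro halg S hRS b
    by_cases hbV : ∃ w : V, ι w = (b : FractionRing V)
    · obtain ⟨v, hv⟩ := hbV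
      by_cases hvR : v ∈ R
      · refine ⟨1, ?_⟩
        have : (((1 : Sˣ) : S) * b : S) = b := by rw [Units.val_one, one_mul]
        rw [this, ← hv, hR']
        exact ⟨v, hvR, rfl⟩
      · have hvM : v ∉ M := fun h => hvR (hMR v h)
        have hx0 : φ v ≠ 0 := fun h => hvM ((hφ0 v).mp h)
        -- the inverse of x := φ v is a polynomial in x over k
        have hinv : (φ v)⁻¹ ∈ Algebra.adjoin k {φ v} :=
          (halg (φ v)).isIntegral.inv_mem_adjoin
        rw [Algebra.adjoin_singleton_eq_range_aeval] at hinv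
        obtain ⟨q, hq0⟩ := hinv
        have hq : Polynomial.aeval (φ v) q = (φ v)⁻¹ := hq0
        -- lift the coefficients of q into R
        choose r hr using fun i => Ideal.Quotient.mk_surjective ((q.coeff i : V ⧸ M))
        have hrR : ∀ i, r i ∈ R := by
          intro i
          rw [hRmem, hr i]
          exact (q.coeff i).2
        set c : V := ∑ i ∈ q.support, r i * v ^ i with hcdef
        have hφc : φ c = (φ v)⁻¹ := by
          rw [hcdef, map_sum, ← hq, Polynomial.aeval_def, Polynomial.eval₂_eq_sum,
            Polynomial.sum_def]
          refine Finset.sum_congr rfl fun i _ => ?_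
          rw [map_mul, map_pow, hr i]
          rfl
        have hc0 : φ c ≠ 0 := by rw [hφc]; exact inv_ne_zero hx0
        have hφcv : φ (c * v) = 1 := by rw [map_mul, hφc, inv_mul_cancel₀ hx0]
        have hcvR : c * v ∈ R := by rw [hRmem, hφcv]; exact one_mem _
        obtain ⟨w, hw⟩ := hunit (c * v) (fun h => by rw [(hφ0 _).mpr h] at hφcv; exact zero_ne_one hφcv)
        have hwinvR : (↑w⁻¹ : V) ∈ R := by
          rw [hRmem]
          have h1 : φ ↑w * φ ↑w⁻¹ = 1 := by rw [← map_mul, w.mul_inv, map_one]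
          rw [hw] at h1
          rw [hφcv, one_mul] at h1
          rw [h1]
          exact one_mem _
        -- ι c ∈ S since its a polynomial in b with coefficients in R' ⊆ S
        have hcS : ι c ∈ S := by
          rw [hcdef, map_sum]
          refine Subring.sum_mem S fun i _ => ?_
          rw [map_mul, map_pow, hv]
          exact S.mul_mem (hRS (hR' ▸ ⟨r i, hrR i, rfl⟩)) (S.pow_mem b.2 i)
        -- the inverse of c in the fraction field lies in S
        set d : V := v * ↑w⁻¹ with hddef
        have hcd : c * d = 1 := by
          rw [hddef, ← mul_assoc, ← hw]
          exact w.mul_inv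
        have hdS : ι d ∈ S := by
          rw [hddef, map_mul, hv]
          exact S.mul_mem b.2 (hRS (hR' ▸ ⟨↑w⁻¹, hwinvR, rfl⟩))
        refine ⟨⟨⟨ι c, hcS⟩, ⟨ι d, hdS⟩, ?_, ?_⟩, ?_⟩
        · ext; show ι c * ι d = 1; rw [← map_mul, hcd, map_one]
        · ext; show ι d * ι c = 1; rw [← map_mul, mul_comm, hcd, map_one]
        · show (ι c) * (b : FractionRing V) ∈ R'
          rw [← hv, ← map_mul, hR']
          exact ⟨c * v, hcvR, rfl⟩
    · -- b is not integral over V, so b⁻¹ ∈ M ⊆ R, and b is a unit of S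
      obtain ⟨w, hw⟩ : ∃ w : V, ι w = (b : FractionRing V)⁻¹ := by
        rcases ValuationRing.isInteger_or_isInteger V (b : FractionRing V) with ⟨w, hw⟩ | ⟨w, hw⟩
        · exact absurd ⟨w, hw⟩ hbV
        · exact ⟨w, hw⟩
      have hb0 : (b : FractionRing V) ≠ 0 := by
        intro h
        exact hbV ⟨0, by rw [map_zero, h]⟩
      have hwM : w ∈ M := by
        by_contra hwm
        obtain ⟨wu, hwu⟩ := hunit w hwm
        have h1 : ι ↑wu * ι ↑wu⁻¹ = 1 := by rw [← map_mul, wu.mul_inv, map_one]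
        rw [hwu, hw] at h1
        exact hbV ⟨↑wu⁻¹, ((inv_mul_eq_one₀ hb0).mp h1).symm⟩
      have hwS : ι w ∈ S := hRS (hR' ▸ ⟨w, hMR w hwM, rfl⟩)
      have hwb : ι w * (b : FractionRing V) = 1 := by rw [hw, inv_mul_cancel₀ hb0]
      refine ⟨⟨⟨ι w, hwS⟩, b, ?_, ?_⟩, ?_⟩
      · ext; exact hwb
      · ext; show (b : FractionRing V) * ι w = 1; rw [mul_comm]; exact hwb
      · show (ι w) * (b : FractionRing V) ∈ R'
        rw [hwb]
        exact one_mem _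
end

section
/- Let R be a pseudo-valuation domain which is a Mori domain, with associated valuation overring V. Then every well-centered overring of R is a Mori domain. -/
open scoped nonZeroDivisors

/-- An ideal of a domain is divisorial if it is its own double divisorial closure
(`I = (R : (R : I))`, i.e. `I_v = I`). -/
def IsDivisorialIdeal (R : Type*) [CommRing R] [IsDomain R] (I : Ideal R) : Prop :=
  1 / (1 / (I : FractionalIdeal R⁰ (FractionRing R))) = (I : FractionalIdeal R⁰ (FractionRing R))

/-- A Mori domain: the ascending chain condition holds on divisorial (integral) ideals. -/
def IsMoriDomain (R : Type*) [CommRing R] [IsDomain R] : Prop :=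
  ∀ c : ℕ → Ideal R, Monotone c → (∀ n, IsDivisorialIdeal R (c n)) →
    ∃ N, ∀ n, N ≤ n → c n = c N

lemma aux_isFractionRing {K : Type*} [Field K] (S : Subring K)
    (h : ∀ z : K, ∃ a b : S, (b : K) ≠ 0 ∧ z * b = a) : IsFractionRing S K := by
  refine (isLocalization_iff _ _).mpr ⟨?_, ?_, ?_⟩
  · rintro ⟨y, hy⟩
    have hy0 : (y : K) ≠ 0 := fun h0 => by
      have : y ≠ 0 := nonZeroDivisors.ne_zero hy
      exact this (Subtype.ext h0)
    exact (isUnit_iff_ne_zero).mpr hy0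
  · intro z
    obtain ⟨a, b, hb, hzb⟩ := h z
    refine ⟨⟨a, ⟨b, mem_nonZeroDivisors_of_ne_zero (fun h0 => hb (by simp [h0]))⟩⟩, ?_⟩
    exact hzb
  · intro x y hxy
    refine ⟨1, ?_⟩
    have : (x : K) = y := hxy
    simp [Subtype.ext this]

lemma divisorial_iff {S : Type*} [CommRing S] [IsDomain S] (K : Type*) [Field K] [Algebra S K]
    [IsFractionRing S K] (I : Ideal S) :
    IsDivisorialIdeal S I ↔
      1 / (1 / (I : FractionalIdeal S⁰ K)) = (I : FractionalIdeal S⁰ K) := by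
  let e : FractionRing S ≃ₐ[S] K := FractionRing.algEquiv S K
  unfold IsDivisorialIdeal
  constructor
  · intro h
    have := congrArg (FractionalIdeal.map (e : FractionRing S →ₐ[S] K)) h
    simpa [FractionalIdeal.map_one_div, FractionalIdeal.map_coeIdeal] using this
  · intro h
    have := congrArg (FractionalIdeal.map (e.symm : K →ₐ[S] FractionRing S)) h
    simpa [FractionalIdeal.map_one_div, FractionalIdeal.map_coeIdeal] using this

lemma mori_of_noetherian {T : Type*} [CommRing T] [IsDomain T] [IsNoetherianRing T] :
    IsMoriDomain T := by
  intro c mono _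
  obtain ⟨n, hn⟩ := monotone_stabilizes_iff_noetherian.mpr inferInstance ⟨c, mono⟩
  exact ⟨n, fun m hm => (hn m hm).symm⟩

lemma mori_of_units {T : Type*} [CommRing T] [IsDomain T] (h : ∀ x : T, x ≠ 0 → IsUnit x) :
    IsMoriDomain T := by
  intro c mono _
  by_cases hh : ∃ n, c n ≠ ⊥
  · obtain ⟨n₀, hn₀⟩ := hh
    obtain ⟨x, hx, hx0⟩ := Submodule.exists_mem_ne_zero_of_ne_bot hn₀
    have htop : c n₀ = ⊤ := Ideal.eq_top_of_isUnit_mem _ hx (h x hx0)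
    refine ⟨n₀, fun n hn => ?_⟩
    have : c n₀ ≤ c n := mono hn
    rw [htop] at this ⊢
    exact top_le_iff.mp this
  · push_neg at hh
    exact ⟨0, fun n _ => (hh n).trans (hh 0).symm⟩

lemma mem_one_div_iff {K : Type*} [Field K] (S : Subring K) [IsFractionRing S K]
    {C : FractionalIdeal S⁰ K} (hC : C ≠ 0) {z : K} :
    z ∈ 1 / C ↔ ∀ y ∈ C, z * y ∈ S := by
  rw [FractionalIdeal.mem_div_iff_of_ne_zero hC]
  refine forall₂_congr fun y hy => ?_
  rw [FractionalIdeal.mem_one_iff]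
  exact ⟨fun ⟨x', hx'⟩ => hx' ▸ x'.2, fun h => ⟨⟨z * y, h⟩, rfl⟩⟩

lemma mem_coeIdeal_iff {K : Type*} [Field K] (S : Subring K) [IsFractionRing S K]
    {c : Ideal S} {z : K} :
    z ∈ (c : FractionalIdeal S⁰ K) ↔ ∃ hz : z ∈ S, ⟨z, hz⟩ ∈ c := by
  rw [FractionalIdeal.mem_coeIdeal]
  constructor
  · rintro ⟨x', hx', rfl⟩; exact ⟨x'.2, hx'⟩
  · rintro ⟨hz, hc⟩; exact ⟨⟨z, hz⟩, hc, rfl⟩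


/-- Key computation: under PVD-like hypotheses, the divisorial closure of a
non-"principal" ideal contained in `x·Vs` (and containing `x`) is exactly `x·Vs`. -/
lemma div_closure_eq {K : Type*} [Field K] (Vs : Subring K) (Ms : Set K)
    (hMV : Ms ⊆ Vs) (h0M : (0 : K) ∈ Ms) (h1M : (1 : K) ∉ Ms)
    (hMabs : ∀ z ∈ Ms, ∀ w ∈ Vs, z * w ∈ Ms)
    (hVor : ∀ z : K, z ∈ Vs ∨ (z⁻¹ ∈ Ms ∧ z ≠ 0))
    (hMsne : ∃ m ∈ Ms, m ≠ 0)
    (T : Subring K) [IsFractionRing T K] (hMT : Ms ⊆ (T : Set K))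
    (w₀ : K) (hw₀V : w₀ ∈ Vs) (hw₀T : w₀ ∉ T)
    (hRP : ∀ z : K, z ∈ T → z ∉ Ms → z⁻¹ ∈ T)
    (x : K) (hx0 : x ≠ 0)
    (C : FractionalIdeal T⁰ K) (hxC : x ∈ C)
    (hCD : ∀ z ∈ C, ∃ v ∈ Vs, z = x * v)
    (x' : K) (hx'C : x' ∈ C) (hx'T : ∀ s ∈ (T : Set K), x' ≠ x * s) :
    ∀ z : K, z ∈ 1 / (1 / C) ↔ ∃ v ∈ Vs, z = x * v := by
  have hC0 : C ≠ 0 := fun h => by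
    rw [h] at hxC
    exact hx0 ((FractionalIdeal.mem_zero_iff _).mp hxC)
  -- Step 1 : 1/C = x⁻¹ · Ms
  have step1 : ∀ y : K, y ∈ 1 / C ↔ y * x ∈ Ms := by
    intro y
    rw [mem_one_div_iff T hC0]
    constructor
    · intro h
      by_contra hyx
      have hyxT : y * x ∈ T := h x hxC
      have hy0 : y ≠ 0 := by
        intro h0; apply hyx; rw [h0, zero_mul]; exact h0M
      have hyx0 : y * x ≠ 0 := mul_ne_zero hy0 hx0
      have hinv : (y * x)⁻¹ ∈ T := hRP _ hyxT hyx
      obtain ⟨v, hvV, hx'eq⟩ := hCD x' hx'C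
      have hsT : (y * x') * (y * x)⁻¹ ∈ T := Subring.mul_mem _ (h x' hx'C) hinv
      refine hx'T _ hsT ?_
      rw [hx'eq]
      field_simp
    · intro h z hz
      obtain ⟨v, hvV, rfl⟩ := hCD z hz
      have : y * x * v ∈ Ms := hMabs _ h _ hvV
      have := hMT this
      simpa [mul_assoc] using this
  have hDne : (1 / C : FractionalIdeal T⁰ K) ≠ 0 := by
    obtain ⟨m, hmM, hm0⟩ := hMsne
    intro h
    have : m * x⁻¹ ∈ 1 / C := by
      rw [step1]
      have : m * x⁻¹ * x = m := by field_simp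
      rw [this]; exact hmM
    rw [h, FractionalIdeal.mem_zero_iff] at this
    exact hm0 (by
      have hx' : x⁻¹ ≠ 0 := inv_ne_zero hx0
      exact (mul_eq_zero.mp this).resolve_right hx')
  intro z
  rw [mem_one_div_iff T hDne]
  constructor
  · intro h
    have hMsub : ∀ m ∈ Ms, z * x⁻¹ * m ∈ T := by
      intro m hm
      have : z * (x⁻¹ * m) ∈ T := by
        apply h
        rw [step1]
        have he : x⁻¹ * m * x = m := by field_simp
        rw [he]; exact hm
      rwa [mul_assoc]
    have hζV : z * x⁻¹ ∈ Vs := by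
      rcases hVor (z * x⁻¹) with hv | ⟨hvi, hvne⟩
      · exact hv
      · exfalso
        apply hw₀T
        have h1 : (z * x⁻¹)⁻¹ * w₀ ∈ Ms := hMabs _ hvi _ hw₀V
        have h2 := hMsub _ h1
        have he : z * x⁻¹ * ((z * x⁻¹)⁻¹ * w₀) = w₀ := by
          rw [← mul_assoc, mul_inv_cancel₀ hvne, one_mul]
        rwa [he] at h2
    refine ⟨z * x⁻¹, hζV, ?_⟩
    field_simp
  · rintro ⟨v, hvV, rfl⟩ y hy
    rw [step1] at hy
    have : y * x * v ∈ Ms := hMabs _ hy _ hvV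
    have := hMT this
    have heq : x * v * y = y * x * v := by ring
    rwa [heq]


set_option maxHeartbeats 1000000 in
/-- Let `R` be a pseudo-valuation domain which is a Mori domain, with associated valuation
overring `V` and maximal ideal `M` (so `R = φ⁻¹(k)` for a subfield `k` of `V/M`).  Then every
well-centered overring of `R` is a Mori domain. -/
theorem PVD_Mori_wellCentered_overring_is_Mori
    (V : Type*) [CommRing V] [IsDomain V] [ValuationRing V]
    (M : Ideal V) [hM : M.IsMaximal] (hMmax : M = IsLocalRing.maximalIdeal V)
    (R : Subring V)
    (hR : letI : Field (V ⧸ M) := Ideal.Quotient.field M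
      ∃ k : Subfield (V ⧸ M), R = Subring.comap (Ideal.Quotient.mk M) k.toSubring)
    (R' : Subring (FractionRing V))
    (hR' : R' = Subring.map (algebraMap V (FractionRing V)) R)
    (hMori : IsMoriDomain R') :
    ∀ S : Subring (FractionRing V), R' ≤ S →
      (∀ b : S, ∃ u : Sˣ, (((u : S) * b : S) : FractionRing V) ∈ R') →
      IsMoriDomain S := by
  classical
  letI : Field (V ⧸ M) := Ideal.Quotient.field M
  obtain ⟨k, hk⟩ := hR
  intro S hRS hwc
  set K := FractionRing V with hKdef
  let A : V →+* K := (algebraMap V K : V →+* K)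
  have hAinj : Function.Injective A := IsFractionRing.injective V K
  set VS : Subring K := A.range with hVSdef
  set Ms : Set K := A '' (M : Set V) with hMsdef
  have hMVs : Ms ⊆ (VS : Set K) := by rintro z ⟨m, _, rfl⟩; exact ⟨m, rfl⟩
  have h0M : (0 : K) ∈ Ms := ⟨0, M.zero_mem, map_zero A⟩
  have h1M : (1 : K) ∉ Ms := by
    rintro ⟨m, hm, hm1⟩
    have : m = 1 := hAinj (by rw [hm1, map_one])
    exact hM.ne_top (M.eq_top_iff_one.mpr (this ▸ hm))
  have hMabs : ∀ z ∈ Ms, ∀ w ∈ VS, z * w ∈ Ms := by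
    rintro z ⟨m, hm, rfl⟩ w ⟨y, rfl⟩
    exact ⟨m * y, M.mul_mem_right y hm, map_mul A m y⟩
  have hMR : (M : Set V) ⊆ (R : Set V) := by
    intro m hm
    rw [hk]
    show m ∈ Subring.comap (Ideal.Quotient.mk M) k.toSubring
    rw [Subring.mem_comap, Ideal.Quotient.eq_zero_iff_mem.mpr hm]
    exact k.toSubring.zero_mem
  have hMR' : Ms ⊆ (R' : Set K) := by
    rintro z ⟨m, hm, rfl⟩
    rw [hR']
    exact ⟨m, hMR hm, rfl⟩
  have hR'V : (R' : Set K) ⊆ (VS : Set K) := by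
    intro z hz
    rw [hR'] at hz
    obtain ⟨r, _, rfl⟩ := hz
    exact ⟨r, rfl⟩
  have hR'S : (R' : Set K) ⊆ (S : Set K) := hRS
  have hunit : ∀ y : V, y ∉ M → ∃ c, y * c = 1 := by
    intro y hy
    have : IsUnit y := by
      by_contra h
      exact hy (hMmax ▸ (IsLocalRing.mem_maximalIdeal y).mpr h)
    exact isUnit_iff_exists_inv.mp this
  have hVor : ∀ z : K, z ∈ VS ∨ (z⁻¹ ∈ Ms ∧ z ≠ 0) := by
    intro z
    by_cases hzV : z ∈ VS
    · exact Or.inl hzV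
    right
    have hz0 : z ≠ 0 := fun h => hzV (h ▸ ⟨0, map_zero A⟩)
    refine ⟨?_, hz0⟩
    obtain ⟨a, b, hb, hz⟩ := IsFractionRing.div_surjective (A := V) z
    have hb0 : b ≠ 0 := nonZeroDivisors.ne_zero hb
    have hAb0 : A b ≠ 0 := fun h => hb0 (hAinj (by rw [h, map_zero]))
    have hzb : z * A b = A a := by rw [← hz]; exact div_mul_cancel₀ _ hAb0
    have ha0 : a ≠ 0 := by
      intro h
      rw [h, map_zero] at hzb
      exact hz0 ((mul_eq_zero.mp hzb).resolve_right hAb0)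
    have hAa0 : A a ≠ 0 := fun h => ha0 (hAinj (by rw [h, map_zero]))
    rcases ValuationRing.cond a b with ⟨q, hq⟩
    rcases hq with hq | hq
    · -- a * q = b : z⁻¹ = A q
      have hzq : z * A q = 1 := by
        have hthis : z * (A a * A q) = A a := by rw [← map_mul, hq]; exact hzb
        have h2 : A a * (z * A q) = A a * 1 := by rw [mul_one]; nth_rewrite 2 [← hthis]; ring
        exact mul_left_cancel₀ hAa0 h2
      have hzinv : z⁻¹ = A q := inv_eq_of_mul_eq_one_right hzq
      have hqM : q ∈ M := by
        by_contra hqM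
        obtain ⟨c, hc⟩ := hunit q hqM
        apply hzV
        refine ⟨c, ?_⟩
        have : z * (A q * A c) = z := by rw [← map_mul, hc, map_one, mul_one]
        rw [← this, ← mul_assoc, hzq, one_mul]
      rw [hzinv]
      exact ⟨q, hqM, rfl⟩
    · -- b * q = a : z = A q ∈ VS, contradiction
      exfalso
      apply hzV
      refine ⟨q, ?_⟩
      have : A b * A q = A b * z := by
        rw [← map_mul, hq, ← hzb]; ring
      exact (mul_left_cancel₀ hAb0 this)
  have hInvV : ∀ z : K, z ∉ Ms → z ≠ 0 → z⁻¹ ∈ VS := by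
    intro z hzM hz0
    rcases hVor z with hz | ⟨hz, _⟩
    · obtain ⟨y, rfl⟩ := hz
      have hyM : y ∉ M := fun h => hzM ⟨y, h, rfl⟩
      obtain ⟨c, hc⟩ := hunit y hyM
      have : (A y) * (A c) = 1 := by rw [← map_mul, hc, map_one]
      exact ⟨c, (inv_eq_of_mul_eq_one_right this).symm⟩
    · exact hMVs hz
  have hKRinv : ∀ z : K, z ∈ R' → z ∉ Ms → ∃ w ∈ (R' : Set K), z * w = 1 := by
    intro z hzR hzM
    rw [hR'] at hzR
    obtain ⟨r, hrR, rfl⟩ := hzR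
    have hrM : r ∉ M := fun h => hzM ⟨r, h, rfl⟩
    have hrk : (Ideal.Quotient.mk M) r ∈ k := by
      have := hrR
      rw [hk] at this
      exact this
    have hr0 : (Ideal.Quotient.mk M) r ≠ 0 := fun h => hrM (Ideal.Quotient.eq_zero_iff_mem.mp h)
    obtain ⟨s, hs⟩ := Ideal.Quotient.mk_surjective (I := M) ((Ideal.Quotient.mk M) r)⁻¹
    have hsR : s ∈ R := by
      rw [hk]
      show (Ideal.Quotient.mk M) s ∈ k.toSubring
      rw [hs]
      exact k.inv_mem hrk
    have hmM : r * s - 1 ∈ M := by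
      rw [← Ideal.Quotient.eq_zero_iff_mem]
      rw [map_sub, map_one, map_mul, hs, mul_inv_cancel₀ hr0, sub_self]
    have h1mM : 1 + (r * s - 1) ∉ M := by
      intro h
      have : (1 : V) ∈ M := by
        have := M.sub_mem h hmM
        simpa using this
      exact hM.ne_top (M.eq_top_iff_one.mpr this)
    obtain ⟨w', hw'⟩ := hunit _ h1mM
    have hrsw : r * (s * w') = 1 := by
      have : (1 + (r * s - 1)) = r * s := by ring
      rw [← hw', this]; ring
    have hw'1 : (Ideal.Quotient.mk M) w' = 1 := by
      have h1 : (Ideal.Quotient.mk M) ((1 + (r * s - 1)) * w') = 1 := by rw [hw', map_one]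
      rw [map_mul, map_add, map_one, Ideal.Quotient.eq_zero_iff_mem.mpr hmM, add_zero,
        one_mul] at h1
      exact h1
    have hswR : s * w' ∈ R := by
      rw [hk]
      show (Ideal.Quotient.mk M) (s * w') ∈ k.toSubring
      rw [map_mul, hw'1, mul_one, hs]
      exact k.inv_mem hrk
    refine ⟨A (s * w'), ?_, ?_⟩
    · rw [hR']; exact ⟨s * w', hswR, rfl⟩
    · rw [← map_mul, hrsw, map_one]
  by_cases hM0 : M = ⊥
  · -- V is a field; S is a field; Mori trivially
    have hMs0 : Ms = {0} := by
      ext z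
      simp only [hMsdef, hM0, Set.mem_image, Set.mem_singleton_iff]
      constructor
      · rintro ⟨m, hm, rfl⟩
        simp only [SetLike.mem_coe, Ideal.mem_bot] at hm
        rw [hm, map_zero]
      · rintro rfl
        exact ⟨0, Submodule.zero_mem _, map_zero A⟩
    apply mori_of_units
    rintro ⟨x, hxS⟩ hx0
    have hx0' : x ≠ 0 := fun h => hx0 (Subtype.ext h)
    obtain ⟨u, hu⟩ := hwc ⟨x, hxS⟩
    have hg : ((u : S) : K) * x ∈ R' := hu
    have hgne : ((u : S) : K) ≠ 0 := by
      intro h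
      have : (u : S) ≠ 0 := Units.ne_zero u
      exact this (Subtype.ext h)
    have hgx0 : ((u : S) : K) * x ≠ 0 := mul_ne_zero hgne hx0'
    have hgxM : ((u : S) : K) * x ∉ Ms := by rw [hMs0]; simpa using hgx0
    obtain ⟨w, hwR, hw1⟩ := hKRinv _ hg hgxM
    refine isUnit_iff_exists_inv.mpr ⟨⟨w * ((u : S) : K), S.mul_mem (hR'S hwR) (u : S).2⟩, ?_⟩
    apply Subtype.ext
    push_cast
    calc x * (w * ((u : S) : K)) = ((u : S) : K) * x * w := by ring
    _ = 1 := hw1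
  · -- M ≠ 0
    obtain ⟨m₀, hm₀M, hm₀0⟩ := Submodule.exists_mem_ne_zero_of_ne_bot hM0
    have hm₀K : A m₀ ∈ Ms := ⟨m₀, hm₀M, rfl⟩
    have hm₀K0 : A m₀ ≠ 0 := fun h => hm₀0 (hAinj (by rw [h, map_zero]))
    have hMsne : ∃ m ∈ Ms, m ≠ 0 := ⟨A m₀, hm₀K, hm₀K0⟩
    have hfrac : ∀ (T : Subring K), Ms ⊆ (T : Set K) → IsFractionRing T K := by
      intro T hT
      apply aux_isFractionRing
      intro z
      obtain ⟨a, b, hb, hz⟩ := IsFractionRing.div_surjective (A := V) z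
      have hb0 : b ≠ 0 := nonZeroDivisors.ne_zero hb
      have hAb0 : A b ≠ 0 := fun h => hb0 (hAinj (by rw [h, map_zero]))
      refine ⟨⟨A (a * m₀), hT ⟨a * m₀, M.mul_mem_left a hm₀M, rfl⟩⟩,
        ⟨A (b * m₀), hT ⟨b * m₀, M.mul_mem_left b hm₀M, rfl⟩⟩, ?_, ?_⟩
      · simp only [ne_eq, map_mul]
        exact mul_ne_zero hAb0 hm₀K0
      · have hzb : z * A b = A a := by
          rw [← hz]; exact div_mul_cancel₀ _ hAb0
        show z * A (b * m₀) = A (a * m₀)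
        rw [map_mul, map_mul, ← mul_assoc, hzb]
    haveI hFR' : IsFractionRing R' K := hfrac R' hMR'
    haveI hFS : IsFractionRing S K := hfrac S (fun z hz => hR'S (hMR' hz))
    have hNoeth : IsNoetherianRing V := by
      rw [isNoetherianRing_iff_ideal_fg]
      intro J
      by_contra hJfg
      have hJtop : J ≠ ⊤ := by
        intro h
        exact hJfg (h ▸ ⟨{1}, by rw [Finset.coe_singleton, Ideal.span_singleton_one]⟩)
      have hJM : J ≤ M := hMmax ▸ IsLocalRing.le_maximalIdeal hJtop
      have hJbot : J ≠ ⊥ := by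
        intro h
        exact hJfg (h ▸ ⟨∅, by rw [Finset.coe_empty, Ideal.span_empty]⟩)
      obtain ⟨x₀, hx₀J, hx₀0⟩ := Submodule.exists_mem_ne_zero_of_ne_bot hJbot
      have step : ∀ y : V, y ∈ J → ∃ y', y' ∈ J ∧ y' ∉ Ideal.span {y} := by
        intro y hy
        by_contra h
        push_neg at h
        apply hJfg
        refine ⟨{y}, ?_⟩
        rw [Finset.coe_singleton]
        apply le_antisymm
        · rw [Ideal.span_le]
          simpa using hy
        · intro z hz
          exact h z hz
      choose f hf1 hf2 using step
      let g : {y : V // y ∈ J} → {y : V // y ∈ J} := fun p => ⟨f p.1 p.2, hf1 p.1 p.2⟩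
      let sq : ℕ → {y : V // y ∈ J} := fun n => Nat.rec ⟨x₀, hx₀J⟩ (fun _ p => g p) n
      have hsq : ∀ n, (sq (n + 1)).1 ∉ Ideal.span {(sq n).1} := fun n => hf2 _ _
      have hsq0 : ∀ n, (sq n).1 ≠ 0 := by
        intro n
        cases n with
        | zero => exact hx₀0
        | succ m => exact fun h => hsq m (h ▸ (Ideal.span {(sq m).1}).zero_mem)
      have hdvd : ∀ n, ∃ q, (sq (n + 1)).1 * q = (sq n).1 := by
        intro n
        rcases ValuationRing.cond (sq n).1 (sq (n + 1)).1 with ⟨q, hq | hq⟩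
        · exact absurd (Ideal.mem_span_singleton'.mpr ⟨q, by rw [mul_comm]; exact hq⟩) (hsq n)
        · exact ⟨q, hq⟩
      set x : ℕ → K := fun n => A (sq n).1 with hxdef
      have hx0' : ∀ n, x n ≠ 0 := fun n h =>
        hsq0 n (hAinj (show A (sq n).1 = A 0 by rw [map_zero]; exact h))
      set Dn : ℕ → Set K := fun n => {w : K | ∃ v ∈ VS, w = x n * v} with hDndef
      have hDMs : ∀ n, Dn n ⊆ Ms := by
        rintro n w ⟨v, ⟨y, rfl⟩, rfl⟩
        exact ⟨(sq n).1 * y, M.mul_mem_right y (hJM (sq n).2), map_mul A _ _⟩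
      let cI : ℕ → Ideal R' := fun n =>
        { carrier := {r : R' | (r : K) ∈ Dn n}
          add_mem' := by
            rintro a b ⟨v, hv, hva⟩ ⟨w, hw, hwb⟩
            refine ⟨v + w, VS.add_mem hv hw, ?_⟩
            push_cast [hva, hwb]
            ring
          zero_mem' := ⟨0, VS.zero_mem, by push_cast; ring⟩
          smul_mem' := by
            rintro c r ⟨v, hv, hvr⟩
            refine ⟨c.1 * v, VS.mul_mem (hR'V c.2) hv, ?_⟩
            show ((c * r : R') : K) = x n * (c.1 * v)
            push_cast [hvr]
            ring }
      have hmemcI : ∀ (n : ℕ) (r : R'), r ∈ cI n ↔ (r : K) ∈ Dn n := fun n r => Iff.rfl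
      have hmono : Monotone cI := by
        apply monotone_nat_of_le_succ
        intro n r hr
        obtain ⟨v, hv, hvr⟩ := hr
        obtain ⟨q, hq⟩ := hdvd n
        refine ⟨A q * v, VS.mul_mem ⟨q, rfl⟩ hv, ?_⟩
        rw [hvr, ← mul_assoc]
        congr 1
        show x n = x (n + 1) * A q
        rw [← map_mul, hq]
      have hmemC : ∀ (n : ℕ) (z : K), z ∈ ((cI n : Ideal R') : FractionalIdeal R'⁰ K) ↔ z ∈ Dn n := by
        intro n z
        rw [mem_coeIdeal_iff]
        constructor
        · rintro ⟨hz, h⟩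
          exact h
        · intro h
          exact ⟨hMR' (hDMs n h), h⟩
      have hdiv : ∀ n, IsDivisorialIdeal R' (cI n) := by
        intro n
        rw [divisorial_iff K]
        by_cases hVR' : ∀ z ∈ (VS : Set K), z ∈ R'
        · have hCeq : ((cI n : Ideal R') : FractionalIdeal R'⁰ K)
              = FractionalIdeal.spanSingleton R'⁰ (x n) := by
            apply FractionalIdeal.coeToSubmodule_injective
            apply Submodule.ext
            intro z
            rw [FractionalIdeal.mem_coe, FractionalIdeal.mem_coe, hmemC,
              FractionalIdeal.mem_spanSingleton]
            constructor
            · rintro ⟨v, hv, rfl⟩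
              refine ⟨⟨v, hVR' v hv⟩, ?_⟩
              rw [Algebra.smul_def]
              show v * x n = x n * v
              ring
            · rintro ⟨s, rfl⟩
              refine ⟨s.1, hR'V s.2, ?_⟩
              rw [Algebra.smul_def]
              show (s.1 : K) * x n = x n * s.1
              ring
          rw [hCeq, FractionalIdeal.one_div_spanSingleton,
            FractionalIdeal.one_div_spanSingleton, inv_inv]
        · push_neg at hVR'
          obtain ⟨w₀, hw₀V, hw₀R⟩ := hVR'
          have hRP : ∀ z : K, z ∈ R' → z ∉ Ms → z⁻¹ ∈ R' := by
            intro z hz hzM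
            obtain ⟨w, hwR, hw1⟩ := hKRinv z hz hzM
            rw [inv_eq_of_mul_eq_one_right hw1]
            exact hwR
          have key := div_closure_eq VS Ms hMVs h0M h1M hMabs hVor hMsne R' hMR' w₀ hw₀V hw₀R hRP
            (x n) (hx0' n) ((cI n : Ideal R') : FractionalIdeal R'⁰ K)
            ((hmemC n _).mpr ⟨1, VS.one_mem, (mul_one _).symm⟩)
            (fun z hz => (hmemC n z).mp hz)
            (x n * w₀) ((hmemC n _).mpr ⟨w₀, hw₀V, rfl⟩)
            (fun s hs heq => hw₀R ((mul_left_cancel₀ (hx0' n) heq) ▸ hs))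
          apply FractionalIdeal.coeToSubmodule_injective
          apply Submodule.ext
          intro z
          rw [FractionalIdeal.mem_coe, FractionalIdeal.mem_coe, key z, hmemC]
          exact Iff.rfl
      obtain ⟨N, hN⟩ := hMori cI hmono hdiv
      have h1 : (⟨x (N + 1), hMR' (hDMs (N + 1) ⟨1, VS.one_mem, (mul_one _).symm⟩)⟩ : R')
          ∈ cI (N + 1) := ⟨1, VS.one_mem, (mul_one _).symm⟩
      rw [hN (N + 1) (Nat.le_succ N)] at h1
      obtain ⟨v, ⟨y, rfl⟩, hv⟩ := h1
      apply hsq N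
      rw [Ideal.mem_span_singleton']
      refine ⟨y, ?_⟩
      apply hAinj
      rw [map_mul]
      have hv' : x (N + 1) = x N * A y := hv
      show A y * x N = x (N + 1)
      rw [hv']
      ring
    have hMfg : M.FG := (isNoetherianRing_iff_ideal_fg V).mp hNoeth M
    obtain ⟨t, ht⟩ := (IsBezout.isPrincipal_of_FG M hMfg).principal
    have ht0 : t ≠ 0 := by
      intro h
      rw [h] at ht
      exact hM0 (by rw [ht]; exact Submodule.span_singleton_eq_bot.mpr rfl)
    by_cases hSV : ∀ z ∈ (S : Set K), z ∈ VS
    · -- Case B : S ⊆ V'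
      have hRPS : ∀ z : K, z ∈ S → z ∉ Ms → z⁻¹ ∈ S := by
        intro z hzS hzM
        obtain ⟨u, hu⟩ := hwc ⟨z, hzS⟩
        set g : K := ((u : S) : K) with hgdef
        have hgS : g ∈ S := (u : S).2
        have hgR : g * z ∈ R' := hu
        have hgu : g * (((u⁻¹ : Sˣ) : S) : K) = 1 := by
          have h1 : ((u : S) * ((u⁻¹ : Sˣ) : S) : S) = 1 := by
            rw [← Units.val_mul, mul_inv_cancel, Units.val_one]
          calc g * (((u⁻¹ : Sˣ) : S) : K) = (((u : S) * ((u⁻¹ : Sˣ) : S) : S) : K) := by push_cast; rfl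
          _ = 1 := by rw [h1]; rfl
        have hgM : g ∉ Ms := by
          intro hgMs
          apply h1M
          rw [← hgu]
          exact hMabs _ hgMs _ (hSV _ ((u⁻¹ : Sˣ) : S).2)
        have hgzM : g * z ∉ Ms := by
          rintro ⟨m, hmM, hm⟩
          obtain ⟨b, hb⟩ := hSV g hgS
          obtain ⟨a, ha⟩ := hSV z hzS
          have hba : b * a ∈ M := by
            have heq : A (b * a) = A m := by rw [map_mul, hb, ha, hm]
            rwa [← hAinj heq] at hmM
          rcases hM.isPrime.mem_or_mem hba with hb' | ha'
          · exact hgM ⟨b, hb', hb⟩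
          · exact hzM ⟨a, ha', ha⟩
        obtain ⟨w, hwR, hw1⟩ := hKRinv _ hgR hgzM
        have hzw : z * (g * w) = 1 := by
          calc z * (g * w) = g * z * w := by ring
          _ = 1 := hw1
        rw [inv_eq_of_mul_eq_one_right hzw]
        exact S.mul_mem hgS (hR'S hwR)
      by_cases hVS' : ∀ z ∈ (VS : Set K), z ∈ S
      · -- S = V' : Noetherian
        haveI := hNoeth
        have hsurj : Function.Surjective (A.codRestrict S (fun y => hVS' _ ⟨y, rfl⟩)) := by
          rintro ⟨s, hsS⟩
          obtain ⟨y, hy⟩ := hSV s hsS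
          exact ⟨y, Subtype.ext hy⟩
        haveI := isNoetherianRing_of_surjective V S _ hsurj
        exact mori_of_noetherian
      · push_neg at hVS'
        obtain ⟨w₀, hw₀V, hw₀S⟩ := hVS'
        intro c mono hdiv
        set Cn : ℕ → FractionalIdeal S⁰ K := fun n => ((c n : Ideal S) : FractionalIdeal S⁰ K)
          with hCndef
        have hCdiv : ∀ n, 1 / (1 / Cn n) = Cn n := fun n => (divisorial_iff K (c n)).mp (hdiv n)
        have hCmono : ∀ {m n : ℕ}, m ≤ n → ∀ z : K, z ∈ Cn m → z ∈ Cn n := by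
          intro m n hmn z hz
          rw [hCndef] at hz ⊢
          rw [mem_coeIdeal_iff] at hz ⊢
          obtain ⟨hzS, hzc⟩ := hz
          exact ⟨hzS, mono hmn hzc⟩
        have hCS : ∀ (n : ℕ) (z : K), z ∈ Cn n → z ∈ S := by
          intro n z hz
          rw [hCndef, mem_coeIdeal_iff] at hz
          exact hz.1
        have hCV : ∀ (n : ℕ) (z : K), z ∈ Cn n → ∃ b : V, A b = z :=
          fun n z hz => hSV z (hCS n z hz)
        let Jn : ℕ → Ideal V := fun n =>
          { carrier := {y : V | ∃ z ∈ Cn n, ∃ v ∈ VS, A y = z * v}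
            add_mem' := by
              rintro a b ⟨z₁, hz₁, v₁, hv₁, ha⟩ ⟨z₂, hz₂, v₂, hv₂, hb⟩
              obtain ⟨b₁, hb₁⟩ := hCV _ _ hz₁
              obtain ⟨b₂, hb₂⟩ := hCV _ _ hz₂
              rcases ValuationRing.cond b₁ b₂ with ⟨q, hq | hq⟩
              · refine ⟨z₁, hz₁, v₁ + A q * v₂, VS.add_mem hv₁ (VS.mul_mem ⟨q, rfl⟩ hv₂), ?_⟩
                have h2 : z₂ = z₁ * A q := by rw [← hb₂, ← hb₁, ← map_mul, hq]
                rw [map_add, ha, hb, h2]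
                ring
              · refine ⟨z₂, hz₂, v₂ + A q * v₁, VS.add_mem hv₂ (VS.mul_mem ⟨q, rfl⟩ hv₁), ?_⟩
                have h2 : z₁ = z₂ * A q := by rw [← hb₂, ← hb₁, ← map_mul, hq]
                rw [map_add, ha, hb, h2]
                ring
            zero_mem' := ⟨0, (Cn _).zero_mem, 1, VS.one_mem, by rw [map_zero, zero_mul]⟩
            smul_mem' := by
              rintro r y ⟨z, hz, v, hv, hy⟩
              refine ⟨z, hz, A r * v, VS.mul_mem ⟨r, rfl⟩ hv, ?_⟩
              show A (r * y) = z * (A r * v)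
              rw [map_mul, hy]
              ring }
        have hJmono : Monotone Jn := by
          intro m n hmn y hy
          obtain ⟨z, hz, v, hv, hyeq⟩ := hy
          exact ⟨z, hCmono hmn z hz, v, hv, hyeq⟩
        obtain ⟨N₀, hN₀⟩ := monotone_stabilizes_iff_noetherian.mpr hNoeth ⟨Jn, hJmono⟩
        have hJfg : (Jn N₀).FG := (isNoetherianRing_iff_ideal_fg V).mp hNoeth _
        obtain ⟨x₀v, hx₀v⟩ := (IsBezout.isPrincipal_of_FG _ hJfg).principal
        have hx₀vspan : Jn N₀ = Ideal.span {x₀v} := hx₀v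
        set x₀K : K := A x₀v with hx₀Kdef
        have hCD : ∀ (n : ℕ), N₀ ≤ n → ∀ z ∈ Cn n, ∃ v ∈ VS, z = x₀K * v := by
          intro n hn z hz
          obtain ⟨b, hb⟩ := hCV n z hz
          have hbJ : b ∈ Jn n := ⟨z, hz, 1, VS.one_mem, by rw [hb, mul_one]⟩
          have hJeq : Jn N₀ = Jn n := hN₀ n hn
          have hbJ0 : b ∈ Jn N₀ := by rw [hJeq]; exact hbJ
          rw [hx₀vspan] at hbJ0
          obtain ⟨d, hd⟩ := Ideal.mem_span_singleton'.mp hbJ0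
          refine ⟨A d, ⟨d, rfl⟩, ?_⟩
          rw [← hb, ← hd, map_mul]
          ring
        by_cases hx₀0 : x₀v = 0
        · have hzero : ∀ (n : ℕ), N₀ ≤ n → ∀ r : S, r ∈ c n → r = 0 := by
            intro n hn r hr
            have hrC : (r : K) ∈ Cn n := by
              rw [hCndef, mem_coeIdeal_iff]
              exact ⟨r.2, hr⟩
            obtain ⟨v, hv, heq⟩ := hCD n hn _ hrC
            have : (r : K) = 0 := by rw [heq, hx₀Kdef, hx₀0, map_zero, zero_mul]
            exact Subtype.ext this
          refine ⟨N₀, fun n hn => ?_⟩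
          ext r
          constructor
          · intro h
            rw [hzero n hn r h]
            exact (c N₀).zero_mem
          · intro h
            rw [hzero N₀ le_rfl r h]
            exact (c n).zero_mem
        · have hx₀ : x₀K ≠ 0 := fun h =>
            hx₀0 (hAinj (show A x₀v = A 0 by rw [map_zero]; exact h))
          have hxn : ∀ (n : ℕ), N₀ ≤ n → ∃ xn : K, xn ∈ Cn n ∧ (∃ v ∈ VS, xn = x₀K * v)
              ∧ (∃ v' ∈ VS, x₀K = xn * v') := by
            intro n hn
            have hJeq : Jn N₀ = Jn n := hN₀ n hn
            have hx₀J : x₀v ∈ Jn n := by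
              rw [← hJeq, hx₀vspan]
              exact Ideal.subset_span rfl
            obtain ⟨z, hz, v, hv, hy⟩ := hx₀J
            obtain ⟨b, hb⟩ := hCV n z hz
            have hbJ : b ∈ Jn n := ⟨z, hz, 1, VS.one_mem, by rw [hb, mul_one]⟩
            have hbJ0 : b ∈ Jn N₀ := by rw [hJeq]; exact hbJ
            rw [hx₀vspan] at hbJ0
            obtain ⟨d, hd⟩ := Ideal.mem_span_singleton'.mp hbJ0
            refine ⟨z, hz, ⟨A d, ⟨d, rfl⟩, ?_⟩, ⟨v, hv, hy⟩⟩
            rw [← hb, ← hd, map_mul]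
            ring
          choose xf hxf1 hxf2 hxf3 using hxn
          by_cases hfull : ∃ n, ∃ hn : N₀ ≤ n, ∀ z : K, z ∈ Cn n ↔ ∃ v ∈ VS, z = x₀K * v
          · obtain ⟨n₁, hn₁, hf⟩ := hfull
            refine ⟨n₁, fun n hn => ?_⟩
            have hn' : N₀ ≤ n := le_trans hn₁ hn
            ext r
            constructor
            · intro h
              have hrC : (r : K) ∈ Cn n := by
                rw [hCndef, mem_coeIdeal_iff]
                exact ⟨r.2, h⟩
              have hr1 : (r : K) ∈ Cn n₁ := (hf _).mpr (hCD n hn' _ hrC)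
              rw [hCndef, mem_coeIdeal_iff] at hr1
              obtain ⟨h1, h2⟩ := hr1
              rwa [show (⟨(r : K), h1⟩ : S) = r from Subtype.ext rfl] at h2
            · intro h
              exact mono hn h
          · have hprin : ∀ (n : ℕ) (hn : N₀ ≤ n), ∀ z, z ∈ Cn n →
                ∃ s ∈ (S : Set K), z = xf n hn * s := by
              intro n hn
              by_contra hcon
              push_neg at hcon
              obtain ⟨x', hx'C, hx'T⟩ := hcon
              apply hfull
              refine ⟨n, hn, ?_⟩
              have hxf0 : xf n hn ≠ 0 := by
                intro h
                obtain ⟨v', hv', h2⟩ := hxf3 n hn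
                exact hx₀ (by rw [h2, h, zero_mul])
              have hCD' : ∀ z ∈ Cn n, ∃ v ∈ VS, z = xf n hn * v := by
                intro z hz
                obtain ⟨v, hv, heq⟩ := hCD n hn z hz
                obtain ⟨v', hv', h2⟩ := hxf3 n hn
                exact ⟨v' * v, VS.mul_mem hv' hv, by rw [heq, h2]; ring⟩
              have hxw := div_closure_eq VS Ms hMVs h0M h1M hMabs hVor hMsne S
                (fun z hz => hR'S (hMR' hz)) w₀ hw₀V hw₀S hRPS (xf n hn) hxf0 (Cn n)
                (hxf1 n hn) hCD' x' hx'C hx'T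
              intro z
              constructor
              · intro hz
                obtain ⟨v, hv, heq⟩ := hCD n hn z hz
                exact ⟨v, hv, heq⟩
              · rintro ⟨v, hv, rfl⟩
                have : x₀K * v ∈ 1 / (1 / Cn n) := by
                  rw [hxw]
                  obtain ⟨v', hv', h2⟩ := hxf3 n hn
                  exact ⟨v' * v, VS.mul_mem hv' hv, by rw [h2]; ring⟩
                rwa [hCdiv n] at this
            refine ⟨N₀, fun n hn => ?_⟩
            induction n, hn using Nat.le_induction with
            | base => rfl
            | succ n hn ih =>
              have hn1 : N₀ ≤ n + 1 := le_trans hn (Nat.le_succ n)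
              have key : ∀ z : K, z ∈ Cn (n + 1) → z ∈ Cn n := by
                intro z hz
                obtain ⟨σ, hσ, hzeq⟩ := hprin (n + 1) hn1 z hz
                have hxfn1 : xf n hn ∈ Cn (n + 1) := hCmono (Nat.le_succ n) _ (hxf1 n hn)
                obtain ⟨s, hs, hseq⟩ := hprin (n + 1) hn1 _ hxfn1
                obtain ⟨v₁, hv₁, h1⟩ := hxf2 (n + 1) hn1
                obtain ⟨v₂', hv₂', h2⟩ := hxf3 n hn
                have hw : xf (n + 1) hn1 = xf n hn * (v₂' * v₁) := by
                  rw [h1, h2]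
                  ring
                have hxfn0 : xf n hn ≠ 0 := fun h => hx₀ (by rw [h2, h, zero_mul])
                have hsw : s * (v₂' * v₁) = 1 := by
                  have hh : xf n hn * (s * (v₂' * v₁)) = xf n hn * 1 := by
                    rw [mul_one]
                    calc xf n hn * (s * (v₂' * v₁)) = xf n hn * (v₂' * v₁) * s := by ring
                    _ = xf (n + 1) hn1 * s := by rw [← hw]
                    _ = xf n hn := hseq.symm
                  exact mul_left_cancel₀ hxfn0 hh
                have hsM : s ∉ Ms := by
                  intro hsMs
                  exact h1M (hsw ▸ hMabs _ hsMs _ (VS.mul_mem hv₂' hv₁))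
                have hsinv : s⁻¹ ∈ S := hRPS s hs hsM
                have hvs : v₂' * v₁ = s⁻¹ := (inv_eq_of_mul_eq_one_right hsw).symm
                have hxfS : xf n hn ∈ S := hCS n _ (hxf1 n hn)
                have hmem : ((⟨s⁻¹ * σ, S.mul_mem hsinv hσ⟩ : S)) • (xf n hn) ∈ Cn n := by
                  rw [← FractionalIdeal.mem_coe]
                  exact Submodule.smul_mem _ _ (by rw [FractionalIdeal.mem_coe]; exact hxf1 n hn)
                have heq2 : ((⟨s⁻¹ * σ, S.mul_mem hsinv hσ⟩ : S)) • (xf n hn) = z := by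
                  rw [Algebra.smul_def]
                  show (s⁻¹ * σ) * xf n hn = z
                  rw [hzeq, hw, hvs]
                  ring
                rwa [heq2] at hmem
              have hstep : c (n + 1) = c n := by
                ext r
                constructor
                · intro h
                  have hrC : (r : K) ∈ Cn (n + 1) := by
                    rw [hCndef, mem_coeIdeal_iff]
                    exact ⟨r.2, h⟩
                  have := key _ hrC
                  rw [hCndef, mem_coeIdeal_iff] at this
                  obtain ⟨h1, h2⟩ := this
                  rwa [show (⟨(r : K), h1⟩ : S) = r from Subtype.ext rfl] at h2
                · intro h
                  exact mono (Nat.le_succ n) h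
              rw [hstep, ih]
    · -- S contains an element outside V'; then S = K is a field
      push_neg at hSV
      obtain ⟨s₀, hs₀S, hs₀V⟩ := hSV
      obtain ⟨hs₀inv, hs₀0⟩ := (hVor s₀).resolve_left hs₀V
      have hVsub : (VS : Set K) ⊆ (S : Set K) := by
        intro w hw
        have h1 : s₀⁻¹ * w ∈ Ms := hMabs _ hs₀inv _ hw
        have h2 : s₀ * (s₀⁻¹ * w) = w := mul_inv_cancel_left₀ hs₀0 w
        rw [← h2]
        exact S.mul_mem hs₀S (hR'S (hMR' h1))
      set tK : K := A t with htKdef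
      have htK0 : tK ≠ 0 := fun h => ht0 (hAinj (show A t = A 0 by rw [map_zero]; exact h))
      have htinv : tK⁻¹ ∈ (S : Set K) := by
        obtain ⟨m, hm, hminv⟩ := hs₀inv
        rw [ht] at hm
        obtain ⟨c, hc⟩ := Ideal.mem_span_singleton'.mp hm
        have h2 : s₀⁻¹ = A c * tK := by rw [← hminv, ← hc, map_mul]
        have h3 : tK * (s₀ * A c) = 1 := by
          calc tK * (s₀ * A c) = s₀ * (A c * tK) := by ring
          _ = s₀ * s₀⁻¹ := by rw [h2]
          _ = 1 := mul_inv_cancel₀ hs₀0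
        rw [inv_eq_of_mul_eq_one_right h3]
        exact S.mul_mem hs₀S (hVsub ⟨c, rfl⟩)
      haveI := hNoeth
      have hKrull : ∀ y : V, y ≠ 0 → ∃ n c, y * c = t ^ n := by
        intro y hy
        by_contra h
        push_neg at h
        have hyM : ∀ n, y ∈ M ^ n := by
          intro n
          obtain ⟨q, hq | hq⟩ := ValuationRing.cond y (t ^ n)
          · exact absurd hq (h n q)
          · rw [ht]
            show y ∈ Ideal.span {t} ^ n
            rw [Ideal.span_singleton_pow]
            exact Ideal.mem_span_singleton'.mpr ⟨q, by rw [mul_comm]; exact hq⟩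
        have hbot := Ideal.iInf_pow_eq_bot_of_isLocalRing M hM.ne_top
        have : y ∈ (⊥ : Ideal V) := by
          rw [← hbot]
          exact (Submodule.mem_iInf _).mpr hyM
        exact hy ((Submodule.mem_bot V).mp this)
      apply mori_of_units
      rintro ⟨z, hzS⟩ hz0
      have hz0' : z ≠ 0 := fun h => hz0 (Subtype.ext h)
      rcases hVor z with hzV | ⟨hzinv, _⟩
      · obtain ⟨y, rfl⟩ := hzV
        have hy0 : y ≠ 0 := fun h => hz0' (by rw [h, map_zero])
        obtain ⟨n, c, hc⟩ := hKrull y hy0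
        refine isUnit_iff_exists_inv.mpr
          ⟨⟨A c * tK⁻¹ ^ n, S.mul_mem (hVsub ⟨c, rfl⟩) (S.pow_mem htinv n)⟩, ?_⟩
        apply Subtype.ext
        push_cast
        show A y * (A c * tK⁻¹ ^ n) = 1
        have hyc : A y * A c = tK ^ n := by rw [← map_mul, hc, map_pow]
        rw [← mul_assoc, hyc, inv_pow, mul_inv_cancel₀ (pow_ne_zero n htK0)]
      · refine isUnit_iff_exists_inv.mpr ⟨⟨z⁻¹, hR'S (hMR' hzinv)⟩, ?_⟩
        apply Subtype.ext
        push_cast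
        exact mul_inv_cancel₀ hz0'
end

section
/- Let R be a pseudo-valuation domain with associated valuation overring V (a DVR), maximal ideal M, quotient map φ : V → K = V/M, and R = φ⁻¹(k) for a subfield k of K. If T = φ⁻¹(B) is a well-centered overring of R for some ring B with k ⊆ B ⊆ K, then B is a field. -/
/-- Let `V` be a DVR with maximal ideal `M`, `φ : V → K = V/M` the quotient map, `k` a
subfield of `K`, `R = φ⁻¹(k)`, and `B` an intermediate ring `k ⊆ B ⊆ K`.  If `T = φ⁻¹(B)`
is well-centered on `R`, then `B` is a field. -/
theorem DVR_pullback_wellCentered_implies_field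
    (V : Type*) [CommRing V] [IsDomain V] [IsDiscreteValuationRing V]
    (M : Ideal V) [hM : M.IsMaximal] (hMmax : M = IsLocalRing.maximalIdeal V)
    (B : Subring (V ⧸ M)) (R T : Subring V)
    (hT : T = Subring.comap (Ideal.Quotient.mk M) B)
    (hwc : ∀ b : T, ∃ u : Tˣ, (((u : T) * b : T) : V) ∈ R) :
    letI : Field (V ⧸ M) := Ideal.Quotient.field M
    ∀ k : Subfield (V ⧸ M), k.toSubring ≤ B →
      R = Subring.comap (Ideal.Quotient.mk M) k.toSubring →
      IsField B := by
  intro k hkB hR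
  subst hT hR
  letI : Field (V ⧸ M) := Ideal.Quotient.field M
  set φ := Ideal.Quotient.mk M with hφ
  set T := Subring.comap φ B with hT
  refine ⟨⟨0, 1, by simp [Subtype.ext_iff]⟩, mul_comm, ?_⟩
  rintro ⟨b, hbB⟩ hb
  have hb0 : b ≠ 0 := by simpa [Subtype.ext_iff] using hb
  obtain ⟨v, hv⟩ := Ideal.Quotient.mk_surjective b
  have hvT : v ∈ T := by simpa [hT, Subring.mem_comap, hφ, hv] using hbB
  obtain ⟨u, hu⟩ := hwc ⟨v, hvT⟩
  have huB : φ ((u : T) : V) ∈ B := ((u : T)).prop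
  have huu : ((u : T) : V) * (((u⁻¹ : Tˣ) : T) : V) = 1 := by
    exact_mod_cast congrArg (Subtype.val) u.mul_inv
  have hu0 : φ ((u : T) : V) ≠ 0 := by
    intro h0
    have := congrArg φ huu
    rw [map_mul, h0, zero_mul, map_one] at this
    exact zero_ne_one this
  set c : V ⧸ M := φ (((u : T) * (⟨v, hvT⟩ : T) : T) : V) with hc
  have hck : c ∈ k := (Subfield.mem_toSubring k _).mp hu
  have hcval : c = φ ((u : T) : V) * b := by
    rw [hc]; push_cast; rw [map_mul, hv]
  have hc0 : c ≠ 0 := by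
    rw [hcval]; exact mul_ne_zero hu0 hb0
  have hcinv : c⁻¹ ∈ k := k.inv_mem hck
  refine ⟨⟨φ ((u : T) : V) * c⁻¹, B.mul_mem huB (hkB hcinv)⟩, ?_⟩
  ext
  show b * (φ ((u : T) : V) * c⁻¹) = 1
  rw [show b * (φ ((u : T) : V) * c⁻¹) = (φ ((u : T) : V) * b) * c⁻¹ by ring,
    ← hcval, mul_inv_cancel₀ hc0]
end

section
/- Let A be a commutative ring, Tot(A) its total quotient ring, E a Tot(A)-module, and R = A ⋉ E the trivial (Nagata idealization) extension. If B is an overring of A (A ⊆ B ⊆ Tot(A)), then B ⋉ E is an overring of R, i.e. R ⊆ B ⋉ E ⊆ Tot(R). -/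
open TrivSqZeroExt

/-- For a module over a commutative ring, the canonical right (opposite) module structure. -/
noncomputable instance commMopModule (K : Type*) [CommRing K] (E : Type*) [AddCommGroup E]
    [Module K E] : Module Kᵐᵒᵖ E :=
  Module.compHom E ((RingHom.id K).fromOpposite mul_comm)

instance commMopCentral (K : Type*) [CommRing K] (E : Type*) [AddCommGroup E] [Module K E] :
    IsCentralScalar K E :=
  ⟨fun _ _ => rfl⟩

/-- The first projection of a trivial extension, as a ring homomorphism. -/
noncomputable def fstRingHom (K : Type*) [CommRing K] (E : Type*) [AddCommGroup E]
    [Module K E] : TrivSqZeroExt K E →+* K where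
  toFun := fst
  map_one' := rfl
  map_mul' := fst_mul
  map_zero' := rfl
  map_add' := fst_add

/-- If `E` is a `Tot(A)`-module and `B` an overring of `A`, then `B ⋉ E` is an overring of
`R = A ⋉ E`: it is a subring of `Tot(A) ⋉ E` containing `R`, each of whose elements is a
fraction over `R` with regular denominator in `R`. -/
theorem trivial_extension_of_overring_is_overring
    (A : Type*) [CommRing A] (E : Type*) [AddCommGroup E] [Module (FractionRing A) E]
    (B : Subring (FractionRing A)) (hB : (algebraMap A (FractionRing A)).range ≤ B)
    (R : Subring (TrivSqZeroExt (FractionRing A) E))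
    (hR : ∀ x, x ∈ R ↔ fst x ∈ (algebraMap A (FractionRing A)).range) :
    ∃ S : Subring (TrivSqZeroExt (FractionRing A) E),
      (∀ x, x ∈ S ↔ fst x ∈ B) ∧ R ≤ S ∧
      ∀ x ∈ S, ∃ s ∈ R, (∀ y ∈ R, s * y = 0 → y = 0) ∧ s * x ∈ R := by
  refine ⟨B.comap (fstRingHom (FractionRing A) E), fun x => Iff.rfl, ?_, ?_⟩
  · intro x hx
    exact hB ((hR x).1 hx)
  · intro x hx
    obtain ⟨⟨a, s⟩, hs⟩ := IsLocalization.surj (M := nonZeroDivisors A) (fst x)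
    refine ⟨inl (algebraMap A (FractionRing A) s), (hR _).2 ⟨s, by simp⟩, ?_, ?_⟩
    · intro y _ hy
      have hu : IsUnit (algebraMap A (FractionRing A) s) :=
        IsLocalization.map_units _ s
      have h1 : fst (inl (algebraMap A (FractionRing A) (s : A)) * y) = 0 := by rw [hy]; rfl
      have h2 : snd (inl (algebraMap A (FractionRing A) (s : A)) * y) = 0 := by rw [hy]; rfl
      rw [fst_mul, fst_inl] at h1
      rw [snd_mul, snd_inl, smul_zero, add_zero, fst_inl] at h2
      ext
      · exact hu.mul_right_eq_zero.mp h1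
      · obtain ⟨u, hu'⟩ := hu
        have := congrArg (fun e => (↑u⁻¹ : FractionRing A) • e) h2
        simpa [smul_smul, ← hu', ← mul_smul, u.inv_mul] using this
    · refine (hR _).2 ?_
      rw [fst_mul, fst_inl]
      exact ⟨a, by rw [mul_comm] at hs; exact hs.symm⟩
end

section
/- Let A be a commutative ring, E a Tot(A)-module, and R = A ⋉ E. Then the total quotient ring of R is Tot(A) ⋉ E; equivalently, every element of Tot(A) ⋉ E is a unit or a zerodivisor, and every regular element of R becomes invertible in Tot(A) ⋉ E. -/
open TrivSqZeroExt

theorem frac_unit_or_zd (A : Type*) [CommRing A] (x : FractionRing A) :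
    IsUnit x ∨ ∃ y : FractionRing A, y ≠ 0 ∧ x * y = 0 := by
  by_cases h : IsUnit x
  · exact Or.inl h
  right
  obtain ⟨⟨a, s⟩, hs⟩ := IsLocalization.surj (M := nonZeroDivisors A) (S := FractionRing A) x
  have hsu : IsUnit (algebraMap A (FractionRing A) s) := IsLocalization.map_units _ s
  have ha : a ∉ nonZeroDivisors A := by
    intro hmem
    exact h (isUnit_of_mul_isUnit_left (hs ▸ IsLocalization.map_units (FractionRing A) ⟨a, hmem⟩))
  obtain ⟨b, hb0, hab⟩ : ∃ b, b * a = 0 ∧ b ≠ 0 := by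
    simpa [mem_nonZeroDivisors_iff_right] using ha
  refine ⟨algebraMap A (FractionRing A) s * algebraMap A (FractionRing A) b, ?_, ?_⟩
  · intro h0
    rw [hsu.mul_right_eq_zero] at h0
    exact hab (IsFractionRing.injective A (FractionRing A) (by simpa using h0))
  · rw [← mul_assoc, hs, ← map_mul, mul_comm a b, hb0, map_zero]


set_option maxHeartbeats 1000000 in
set_option synthInstance.maxHeartbeats 1000000 in
/-- If `E` is a `Tot(A)`-module and `R = A ⋉ E`, then `Tot(A) ⋉ E` is the total quotient
ring of `R`: every element of `Tot(A) ⋉ E` is a unit or a zerodivisor, and every regular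
element of `R` is invertible in `Tot(A) ⋉ E`. -/
theorem total_quotient_ring_of_trivial_extension
    (A : Type*) [CommRing A] (E : Type*) [AddCommGroup E] [Module (FractionRing A) E]
    (R : Subring (TrivSqZeroExt (FractionRing A) E))
    (hR : ∀ x, x ∈ R ↔ fst x ∈ (algebraMap A (FractionRing A)).range) :
    (∀ x : TrivSqZeroExt (FractionRing A) E, IsUnit x ∨ ∃ y ≠ 0, x * y = 0) ∧
    (∀ s ∈ R, (∀ y ∈ R, s * y = 0 → y = 0) → IsUnit s) := by
  constructor
  · intro x
    rcases frac_unit_or_zd A (fst x) with h | ⟨y, hy0, hxy⟩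
    · exact Or.inl (isUnit_iff_isUnit_fst.mpr h)
    right
    by_cases he : y • snd x = 0
    · refine ⟨inl y, fun h0 => hy0 (by simpa using congrArg fst h0), ?_⟩
      ext
      · simpa using hxy
      · simpa [snd_mul, op_smul_eq_smul] using he
    · refine ⟨inr (y • snd x), fun h0 => he (by simpa using congrArg snd h0), ?_⟩
      ext
      · simp
      · simp only [snd_mul, snd_inr, fst_inr, op_smul_eq_smul, zero_smul, add_zero, smul_smul, snd_zero]
        rw [hxy, zero_smul]
  · intro s hs hreg
    obtain ⟨a, ha⟩ := (hR s).mp hs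
    rw [isUnit_iff_isUnit_fst, ← ha]
    have hmem : a ∈ nonZeroDivisors A := by
      rw [mem_nonZeroDivisors_iff_right]
      intro b hb
      have hab : algebraMap A (FractionRing A) a * algebraMap A (FractionRing A) b = 0 := by
        rw [← map_mul, mul_comm, hb, map_zero]
      by_cases he : (algebraMap A (FractionRing A) b) • snd s = 0
      · have hy : (inl (algebraMap A (FractionRing A) b) :
            TrivSqZeroExt (FractionRing A) E) ∈ R := by
          rw [hR]; exact ⟨b, by simp⟩
        have := hreg _ hy (by ext
                              · simpa [ha] using hab
                              · simpa [snd_mul, op_smul_eq_smul] using he)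
        apply IsFractionRing.injective A (FractionRing A)
        simpa using congrArg fst this
      · exfalso
        have hy : (inr ((algebraMap A (FractionRing A) b) • snd s) :
            TrivSqZeroExt (FractionRing A) E) ∈ R := by
          rw [hR]; exact ⟨0, by simp⟩
        have := hreg _ hy (by ext
                              · simp
                              · simp only [snd_mul, snd_inr, fst_inr, op_smul_eq_smul,
                                  zero_smul, add_zero, smul_smul, snd_zero]
                                rw [← ha, hab, zero_smul])
        exact he (by simpa using congrArg snd this)
    exact IsLocalization.map_units (FractionRing A) (⟨a, hmem⟩ : nonZeroDivisors A)
end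

section
/- Let A be a commutative ring, E a Tot(A)-module, and R = A ⋉ E. Every overring S of R (R ⊆ S ⊆ Tot(R)) is of the form S = B ⋉ E for a unique overring B of A. -/
open TrivSqZeroExt

/-- If `E` is a `Tot(A)`-module and `R = A ⋉ E`, then every overring `S` of `R`
(inside `Tot(R) = Tot(A) ⋉ E`) is of the form `B ⋉ E` for a unique overring `B` of `A`. -/
theorem overrings_of_trivial_extension
    (A : Type*) [CommRing A] (E : Type*) [AddCommGroup E] [Module (FractionRing A) E]
    (R : Subring (TrivSqZeroExt (FractionRing A) E))
    (hR : ∀ x, x ∈ R ↔ fst x ∈ (algebraMap A (FractionRing A)).range)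
    (S : Subring (TrivSqZeroExt (FractionRing A) E)) (hS : R ≤ S) :
    ∃! B : Subring (FractionRing A),
      (algebraMap A (FractionRing A)).range ≤ B ∧ ∀ x, x ∈ S ↔ fst x ∈ B := by
  classical
  set K := FractionRing A
  have hmem : ∀ x, x ∈ S ↔ fst x ∈ S.map (fstRingHom K E) := by
    intro x
    constructor
    · intro hx; exact ⟨x, hx, rfl⟩
    · rintro ⟨y, hy, hfy⟩
      have h0 : (inr (snd x - snd y) : TrivSqZeroExt K E) ∈ S :=
        hS ((hR _).2 (by exact ⟨0, by simp⟩))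
      have hfy' : fst y = fst x := hfy
      have hx : x = y + inr (snd x - snd y) := by
        ext
        · simp [hfy']
        · simp
      rw [hx]; exact S.add_mem hy h0
  refine ⟨S.map (fstRingHom K E), ⟨?_, fun x => hmem x⟩, ?_⟩
  · rintro _ ⟨a, rfl⟩
    exact ⟨inl (algebraMap A K a), hS ((hR _).2 ⟨a, by simp [fstRingHom]; rfl⟩), rfl⟩
  · rintro B ⟨hB1, hB2⟩
    ext b
    have h1 := hB2 (inl b)
    have h2 := hmem (inl b)
    simp only [fst_inl] at h1 h2
    rw [← h1, h2]
end

section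
/- Let A ⊆ B be an extension of commutative rings, E a B-module, R = A ⋉ E and T = B ⋉ E. Then T is well-centered on R if and only if B is well-centered on A, where 'well-centered' means: every element of the larger ring is a unit of the larger ring times an element of the smaller ring. -/
open TrivSqZeroExt

/-- For an extension `A ⊆ B` of commutative rings and a `B`-module `E`, the trivial
extension `T = B ⋉ E` is well-centered on `R = A ⋉ E` iff `B` is well-centered on `A`. -/
theorem trivial_extension_wellCentered_iff
    (B : Type*) [CommRing B] (A : Subring B)
    (E : Type*) [AddCommGroup E] [Module B E] :
    (∀ t : TrivSqZeroExt B E, ∃ u : (TrivSqZeroExt B E)ˣ,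
        fst ((u : TrivSqZeroExt B E) * t) ∈ A) ↔
    (∀ b : B, ∃ u : Bˣ, (u : B) * b ∈ A) := by
  constructor
  · intro h b
    obtain ⟨u, hu⟩ := h (inl b)
    refine ⟨Units.map (fstRingHom B E) u, ?_⟩
    exact (by simpa using hu : (u : TrivSqZeroExt B E).fst * b ∈ A)
  · intro h t
    obtain ⟨u, hu⟩ := h (fst t)
    refine ⟨⟨inl (u : B), inl ((u⁻¹ : Bˣ) : B), ?_, ?_⟩, ?_⟩
    · rw [inl_mul_inl]; simp
    · rw [inl_mul_inl]; simp
    · simpa using hu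
end

section
/- Let A be a commutative ring with overrings B and C satisfying A ⊆ B ⊊ C ⊆ Tot(A). Set R = A ⋉ B and S = B ⋉ C (trivial extensions). Then S is not well-centered on R: for any c ∈ C \ B, no unit multiple of (0,c) in S lies in R. -/
open TrivSqZeroExt

/-- Let `A ⊆ B ⊊ C ⊆ Tot(A)` be overrings, `R = A ⋉ B` and `S = B ⋉ C` (inside
`Tot(A) ⋉ Tot(A)`).  Then `S` is not well-centered on `R`: for `c ∈ C \ B`, no unit
multiple of `(0, c)` in `S` lies in `R`. -/
theorem trivial_extension_never_wellCentered
    (A : Type*) [CommRing A]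
    (B C : Subring (FractionRing A))
    (hAB : (algebraMap A (FractionRing A)).range ≤ B) (hBC : B < C)
    (Rset Sset : Set (TrivSqZeroExt (FractionRing A) (FractionRing A)))
    (hRset : ∀ x, x ∈ Rset ↔
      fst x ∈ (algebraMap A (FractionRing A)).range ∧ snd x ∈ B)
    (hSset : ∀ x, x ∈ Sset ↔ fst x ∈ B ∧ snd x ∈ C) :
    (∀ c : FractionRing A, c ∈ C → c ∉ B →
      ¬ ∃ u, u ∈ Sset ∧ (∃ v ∈ Sset, u * v = 1) ∧ u * inr c ∈ Rset) ∧
    ¬ (∀ s ∈ Sset, ∃ u, u ∈ Sset ∧ (∃ v ∈ Sset, u * v = 1) ∧ u * s ∈ Rset) := by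
  have key : ∀ c : FractionRing A, c ∈ C → c ∉ B →
      ¬ ∃ u, u ∈ Sset ∧ (∃ v ∈ Sset, u * v = 1) ∧ u * inr c ∈ Rset := by
    rintro c hcC hcB ⟨u, huS, ⟨v, hvS, huv⟩, hur⟩
    rw [hRset] at hur
    rw [hSset] at huS hvS
    have h1 : fst u * fst v = 1 := by
      have := congrArg fst huv
      simpa using this
    have hsnd : snd (u * inr c) = fst u * c := by
      rw [snd_mul]
      simp [smul_eq_mul]
      exact zero_smul (FractionRing A) u.snd
    have hb : fst u * c ∈ B := hsnd ▸ hur.2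
    apply hcB
    have h2 : fst v * (fst u * c) ∈ B := B.mul_mem hvS.1 hb
    rwa [← mul_assoc, mul_comm (fst v) (fst u), h1, one_mul] at h2
  refine ⟨key, fun h => ?_⟩
  obtain ⟨c, hcC, hcB⟩ := SetLike.exists_of_lt hBC
  have hs : inr c ∈ Sset := (hSset _).2 ⟨by simpa using B.zero_mem, by simpa using hcC⟩
  exact key c hcC hcB (h _ hs)
end

section
/- Let A be a commutative ring, E a Tot(A)-module, R = A ⋉ E. Every finitely generated well-centered overring of R is a localization of R (at some multiplicative set of R) if and only if every finitely generated well-centered overring of A is a localization of A. -/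
open TrivSqZeroExt

/-- `S` is well-centered on `R` (subrings of an ambient commutative ring). -/
def WellCentered {W : Type*} [CommRing W] (R S : Subring W) : Prop :=
  ∀ x ∈ S, ∃ u, u ∈ S ∧ (∃ v ∈ S, u * v = 1) ∧ u * x ∈ R

/-- `S` is a finitely generated `R`-module (subrings of an ambient commutative ring). -/
def FGOver {W : Type*} [CommRing W] (R S : Subring W) : Prop :=
  ∃ (n : ℕ) (g : Fin n → W), (∀ i, g i ∈ S) ∧
    ∀ x ∈ S, ∃ r : Fin n → W, (∀ i, r i ∈ R) ∧ x = ∑ i, r i * g i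

/-- `S` is a localization of `R` at a multiplicative subset of `R`. -/
def IsLocalizationOf {W : Type*} [CommRing W] (R S : Subring W) : Prop :=
  ∃ U : Submonoid W, (U : Set W) ⊆ R ∧ (∀ u ∈ U, ∃ v ∈ S, u * v = 1) ∧
    ∀ x, x ∈ S ↔ ∃ a ∈ R, ∃ u ∈ U, x * u = a

section Aux

variable {K : Type*} [CommRing K] {E : Type*} [AddCommGroup E] [Module K E]
  (A0 : Subring K) (R : Subring (TrivSqZeroExt K E))

theorem aux_main (hR : ∀ x, x ∈ R ↔ fst x ∈ A0) :
    (∀ S : Subring (TrivSqZeroExt K E), R ≤ S →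
        FGOver R S → WellCentered R S → IsLocalizationOf R S) ↔
    (∀ B : Subring K, A0 ≤ B → FGOver A0 B → WellCentered A0 B → IsLocalizationOf A0 B) := by
  set φ := fstRingHom K E with hφ
  have hφfst : ∀ x : TrivSqZeroExt K E, φ x = fst x := fun _ => rfl
  have hinl : ∀ a : K, fst (inl a : TrivSqZeroExt K E) = a := fst_inl E
  constructor
  · -- R-statement implies A-statement
    intro hmain B hAB hFG hWC
    set S : Subring (TrivSqZeroExt K E) := B.comap φ with hS
    have memS : ∀ x : TrivSqZeroExt K E, x ∈ S ↔ fst x ∈ B := fun x => Iff.rfl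
    have hRS : R ≤ S := fun x hx => (memS x).mpr (hAB ((hR x).mp hx))
    -- FGOver R S
    have hFG' : FGOver R S := by
      obtain ⟨n, b, hb, hgen⟩ := hFG
      refine ⟨n + 1, Fin.cons 1 (fun i => inl (b i)), ?_, ?_⟩
      · intro i
        refine Fin.cases ?_ ?_ i
        · exact S.one_mem
        · intro j
          simp only [Fin.cons_succ]
          exact (memS _).mpr (by rw [hinl]; exact hb j)
      · intro x hx
        obtain ⟨a, ha, hxa⟩ := hgen (fst x) ((memS x).mp hx)
        refine ⟨Fin.cons (inr (snd x)) (fun i => inl (a i)), ?_, ?_⟩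
        · intro i
          refine Fin.cases ?_ ?_ i
          · simp only [Fin.cons_zero]
            exact (hR _).mpr (by rw [fst_inr]; exact A0.zero_mem)
          · intro j
            simp only [Fin.cons_succ]
            exact (hR _).mpr (by rw [hinl]; exact ha j)
        · rw [Fin.sum_univ_succ]
          simp only [Fin.cons_succ, Fin.cons_zero, mul_one]
          have : (∑ i : Fin n, inl (a i) * inl (b i) : TrivSqZeroExt K E)
              = inl (∑ i : Fin n, a i * b i) := by
            calc (∑ i : Fin n, inl (a i) * inl (b i) : TrivSqZeroExt K E)
                = ∑ i : Fin n, inl (a i * b i) :=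
                  Finset.sum_congr rfl fun i _ => (inl_mul E (a i) (b i)).symm
              _ = inl (∑ i : Fin n, a i * b i) :=
                  (map_sum (inlHom K E) (fun i => a i * b i) Finset.univ).symm
          rw [this, ← hxa, add_comm]
          exact (inl_fst_add_inr_snd_eq x).symm
    -- WellCentered R S
    have hWC' : WellCentered R S := by
      intro x hx
      obtain ⟨u, hu, ⟨v, hv, huv⟩, hux⟩ := hWC (fst x) ((memS x).mp hx)
      refine ⟨inl u, (memS _).mpr (by rw [hinl]; exact hu),
        ⟨inl v, (memS _).mpr (by rw [hinl]; exact hv), ?_⟩, ?_⟩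
      · rw [inl_mul_inl, huv, inl_one]
      · exact (hR _).mpr (by rw [fst_mul, hinl]; exact hux)
    obtain ⟨U', hU'R, hU'inv, hU'char⟩ := hmain S hRS hFG' hWC'
    refine ⟨U'.map φ.toMonoidHom, ?_, ?_, ?_⟩
    · rintro u ⟨u', hu', rfl⟩
      exact (hR u').mp (hU'R hu')
    · rintro u ⟨u', hu', rfl⟩
      obtain ⟨v', hv', huv⟩ := hU'inv u' hu'
      exact ⟨fst v', (memS v').mp hv', by
        show fst u' * fst v' = 1
        rw [← fst_mul, huv, fst_one]⟩
    · intro b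
      constructor
      · intro hb
        obtain ⟨a, ha, u', hu', hbu⟩ := (hU'char (inl b)).mp ((memS _).mpr (by rwa [hinl]))
        refine ⟨fst a, (hR a).mp ha, fst u', ⟨u', hu', rfl⟩, ?_⟩
        show b * fst u' = fst a
        rw [← hinl b, ← fst_mul, hbu]
      · rintro ⟨a0, ha0, u, ⟨u', hu', rfl⟩, hbu⟩
        have : inl b ∈ S := by
          refine (hU'char (inl b)).mpr ⟨inl b * u', ?_, u', hu', rfl⟩
          exact (hR _).mpr (by rw [fst_mul, hinl]; exact hbu ▸ ha0)
        rw [← hinl b]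
        exact (memS _).mp this
  · -- A-statement implies R-statement
    intro hmain S hRS hFG hWC
    set B : Subring K := S.map φ with hB
    have memS : ∀ x : TrivSqZeroExt K E, x ∈ S ↔ fst x ∈ B := by
      intro x
      constructor
      · intro hx; exact ⟨x, hx, rfl⟩
      · rintro ⟨y, hy, hyx⟩
        have hsub : x - y ∈ R := (hR _).mpr (by
          rw [fst_sub, ← hyx, hφfst, sub_self]; exact A0.zero_mem)
        have : x = y + (x - y) := by ring
        rw [this]
        exact S.add_mem hy (hRS hsub)
    have hAB : A0 ≤ B := by
      intro a ha
      exact ⟨inl a, hRS ((hR _).mpr (by rwa [hinl])), by rw [hφfst, hinl]⟩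
    have hFG' : FGOver A0 B := by
      obtain ⟨n, g, hg, hgen⟩ := hFG
      refine ⟨n, fun i => fst (g i), fun i => (memS _).mp (hg i), ?_⟩
      rintro b ⟨x, hx, rfl⟩
      obtain ⟨r, hr, hxr⟩ := hgen x hx
      refine ⟨fun i => fst (r i), fun i => (hR _).mp (hr i), ?_⟩
      rw [hφfst, hxr]
      rw [show (fst : TrivSqZeroExt K E → K) = φ from rfl, map_sum φ]
      exact Finset.sum_congr rfl fun i _ => map_mul φ _ _
    have hWC' : WellCentered A0 B := by
      rintro b ⟨x, hx, rfl⟩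
      obtain ⟨u, hu, ⟨v, hv, huv⟩, hux⟩ := hWC x hx
      refine ⟨fst u, (memS u).mp hu, ⟨fst v, (memS v).mp hv, ?_⟩, ?_⟩
      · rw [← fst_mul, huv, fst_one]
      · rw [hφfst, ← fst_mul]; exact (hR _).mp hux
    obtain ⟨U, hUA, hUinv, hUchar⟩ := hmain B hAB hFG' hWC'
    refine ⟨U.map (inlHom K E).toMonoidHom, ?_, ?_, ?_⟩
    · rintro x ⟨u, hu, rfl⟩
      exact (hR _).mpr (by rw [show ((inlHom K E).toMonoidHom u : TrivSqZeroExt K E) = inl u from rfl, hinl]; exact hUA hu)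
    · rintro x ⟨u, hu, rfl⟩
      obtain ⟨v, hv, huv⟩ := hUinv u hu
      refine ⟨inl v, (memS _).mpr (by rwa [hinl]), ?_⟩
      rw [show ((inlHom K E).toMonoidHom u : TrivSqZeroExt K E) = inl u from rfl,
        inl_mul_inl, huv, inl_one]
    · intro x
      constructor
      · intro hx
        obtain ⟨a0, ha0, u, hu, hxu⟩ := (hUchar (fst x)).mp ((memS x).mp hx)
        refine ⟨x * inl u, (hR _).mpr (by rw [fst_mul, hinl]; exact hxu ▸ ha0),
          inl u, ⟨u, hu, rfl⟩, rfl⟩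
      · rintro ⟨a, ha, w, ⟨u, hu, rfl⟩, hxw⟩
        refine (memS x).mpr ((hUchar (fst x)).mpr ⟨fst x * u, ?_, u, hu, rfl⟩)
        have : fst x * u = fst a := by
          rw [← hxw, fst_mul,
            show fst ((inlHom K E).toMonoidHom u : TrivSqZeroExt K E) = u from hinl u]
        exact this ▸ (hR a).mp ha

end Aux

/-- For `R = A ⋉ E` with `E` a `Tot(A)`-module: every finitely generated well-centered
overring of `R` is a localization of `R` iff every finitely generated well-centered overring
of `A` is a localization of `A`. -/
theorem trivial_extension_fg_wellCentered_localization_iff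
    (A : Type*) [CommRing A] (E : Type*) [AddCommGroup E] [Module (FractionRing A) E]
    (R : Subring (TrivSqZeroExt (FractionRing A) E))
    (hR : ∀ x, x ∈ R ↔ fst x ∈ (algebraMap A (FractionRing A)).range) :
    (∀ S : Subring (TrivSqZeroExt (FractionRing A) E), R ≤ S →
        FGOver R S → WellCentered R S → IsLocalizationOf R S) ↔
    (∀ B : Subring (FractionRing A), (algebraMap A (FractionRing A)).range ≤ B →
        FGOver (algebraMap A (FractionRing A)).range B →
        WellCentered (algebraMap A (FractionRing A)).range B →
        IsLocalizationOf (algebraMap A (FractionRing A)).range B) := by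
  exact aux_main (algebraMap A (FractionRing A)).range R hR
end

section
/- Let A be a commutative ring, E a Tot(A)-module, R = A ⋉ E. Every flat overring of R is well-centered on R if and only if every flat overring of A is well-centered on A. -/
open TrivSqZeroExt TensorProduct

section Aux

variable (A : Type*) [CommRing A] (E : Type*) [AddCommGroup E] [Module (FractionRing A) E]

theorem aux_inr_mem (R : Subring (TrivSqZeroExt (FractionRing A) E))
    (hR : ∀ x, x ∈ R ↔ fst x ∈ (algebraMap A (FractionRing A)).range) (e : E) :
    inr e ∈ R :=
  (hR _).mpr (by rw [fst_inr]; exact zero_mem _)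

theorem aux_inl_mem {R S : Subring (TrivSqZeroExt (FractionRing A) E)}
    (hR : ∀ x, x ∈ R ↔ fst x ∈ (algebraMap A (FractionRing A)).range)
    (hs : R ≤ S) {b : FractionRing A}
    (hb : b ∈ S.map (fstRingHom (FractionRing A) E)) : inl b ∈ S := by
  obtain ⟨s, hsS, rfl⟩ := hb
  have h2 : inr (snd s) ∈ S := hs (aux_inr_mem A E R hR (snd s))
  have h3 := S.sub_mem hsS h2
  have : s - inr (snd s) = inl (fstRingHom (FractionRing A) E s) := by
    rw [sub_eq_iff_eq_add]
    exact ((inl_fst_add_inr_snd_eq s).symm : s = _)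
  rwa [this] at h3

set_option synthInstance.maxHeartbeats 1000000 in
set_option maxHeartbeats 4000000 in
theorem aux_flat_map (R S : Subring (TrivSqZeroExt (FractionRing A) E))
    (hR : ∀ x, x ∈ R ↔ fst x ∈ (algebraMap A (FractionRing A)).range)
    (hs : R ≤ S)
    (hf : letI := (Subring.inclusion hs).toAlgebra; Module.Flat R S)
    (hb : (algebraMap A (FractionRing A)).range ≤ S.map (fstRingHom (FractionRing A) E)) :
    letI := (Subring.inclusion hb).toAlgebra;
    Module.Flat (algebraMap A (FractionRing A)).range (S.map (fstRingHom (FractionRing A) E)) := by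
  letI : Algebra R S := (Subring.inclusion hs).toAlgebra
  haveI flatRS : Module.Flat R S := hf
  set K := FractionRing A with hK
  set A0 := (algebraMap A K).range with hA0
  set B := S.map (fstRingHom K E) with hB
  letI : Algebra A0 B := (Subring.inclusion hb).toAlgebra
  let phi : R →+* A0 := ((fstRingHom K E).comp R.subtype).codRestrict A0
      (fun r => (hR r.1).mp r.2)
  letI : Algebra R A0 := phi.toAlgebra
  letI : Algebra R B := ((Subring.inclusion hb).comp phi).toAlgebra
  haveI : IsScalarTower R A0 B := IsScalarTower.of_algebraMap_eq (fun r => rfl)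
  let g : S →ₐ[R] B :=
    { toRingHom := ((fstRingHom K E).comp S.subtype).codRestrict B (fun s => ⟨s.1, s.2, rfl⟩)
      commutes' := fun r => rfl }
  let f : A0 →ₐ[A0] B := Algebra.ofId A0 B
  let F : (A0 ⊗[R] S) →ₐ[A0] B := Algebra.TensorProduct.lift f g (fun x y => Commute.all _ _)
  let ra : A0 → R := fun a => ⟨inl a.1, (hR _).mpr (by rw [fst_inl]; exact a.2)⟩
  have h1 : ∀ (a : A0) (s : S), a ⊗ₜ[R] s = (1 : A0) ⊗ₜ[R] ((ra a) • s) := by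
    intro a s
    have hra : (ra a) • (1 : A0) = a := by
      apply Subtype.ext
      rw [Algebra.smul_def]
      show fst (inl a.1 : TrivSqZeroExt K E) * 1 = a.1
      rw [fst_inl, mul_one]
    calc a ⊗ₜ[↥R] s = ((ra a) • (1 : A0)) ⊗ₜ[↥R] s := by rw [hra]
      _ = (1 : A0) ⊗ₜ[↥R] ((ra a) • s) := TensorProduct.smul_tmul _ _ _
  have h0 : ∀ (e : E), (1 : A0) ⊗ₜ[R] (⟨inr e, hs (aux_inr_mem A E R hR e)⟩ : S) = 0 := by
    intro e
    have he1 : (⟨inr e, hs (aux_inr_mem A E R hR e)⟩ : S)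
        = (⟨inr e, aux_inr_mem A E R hR e⟩ : R) • (1 : S) := by
      apply Subtype.ext
      rw [Algebra.smul_def]
      exact (mul_one _).symm
    have he2 : (⟨inr e, aux_inr_mem A E R hR e⟩ : R) • (1 : A0) = 0 := by
      apply Subtype.ext
      rw [Algebra.smul_def]
      show fst (inr e : TrivSqZeroExt K E) * 1 = 0
      rw [fst_inr, zero_mul]
    rw [he1, ← TensorProduct.smul_tmul, he2, TensorProduct.zero_tmul]
  let G : B →ₗ[A0] A0 ⊗[R] S :=
    { toFun := fun b => (1 : A0) ⊗ₜ[R] (⟨inl b.1, aux_inl_mem A E hR hs b.2⟩ : S)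
      map_add' := by
        intro b c
        rw [← TensorProduct.tmul_add]
        exact congrArg (fun t : S => (1 : A0) ⊗ₜ[↥R] t) (Subtype.ext (inl_add E _ _))
      map_smul' := by
        intro a b
        dsimp only [RingHom.id_apply]
        have h3 : (ra a) • (⟨inl b.1, aux_inl_mem A E hR hs b.2⟩ : S)
            = ⟨inl ((a • b : B)).1, aux_inl_mem A E hR hs (a • b : B).2⟩ := by
          apply Subtype.ext
          rw [Algebra.smul_def]
          show (inl a.1 : TrivSqZeroExt K E) * inl b.1 = inl ((a • b : B)).1
          rw [inl_mul_inl]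
          have : ((a • b : B)).1 = a.1 * b.1 := by rw [Algebra.smul_def]; rfl
          rw [this]
        have main : a • ((1 : A0) ⊗ₜ[↥R] (⟨inl b.1, aux_inl_mem A E hR hs b.2⟩ : S))
            = (1 : A0) ⊗ₜ[↥R] ((⟨inl ((a • b : B)).1, aux_inl_mem A E hR hs (a • b : B).2⟩ : S)) := by
          rw [TensorProduct.smul_tmul', smul_eq_mul, mul_one, h1, h3]
        exact main.symm }
  have hFG : ∀ b : B, F (G b) = b := by
    intro b
    show F ((1 : A0) ⊗ₜ[R] _) = b
    rw [show F = Algebra.TensorProduct.lift f g (fun x y => Commute.all _ _) from rfl]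
    rw [Algebra.TensorProduct.lift_tmul, map_one, one_mul]
    exact Subtype.ext (fst_inl E b.1)
  have hGF : ∀ z : A0 ⊗[R] S, G (F z) = z := by
    intro z
    induction z using TensorProduct.induction_on with
    | zero => simp
    | add x y hx hy => rw [map_add, map_add, hx, hy]
    | tmul a s =>
      rw [show F = Algebra.TensorProduct.lift f g (fun x y => Commute.all _ _) from rfl]
      rw [Algebra.TensorProduct.lift_tmul, h1 a s]
      have e1 : (ra a) • s
          = (⟨inl (a.1 * fst s.1),
              aux_inl_mem A E hR hs (B.mul_mem (hb a.2) ⟨s.1, s.2, rfl⟩)⟩ : S)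
            + (⟨inr (a.1 • snd s.1), hs (aux_inr_mem A E R hR (a.1 • snd s.1))⟩ : S) := by
        apply Subtype.ext
        rw [Algebra.smul_def]
        show (inl a.1 : TrivSqZeroExt K E) * s.1
            = inl (a.1 * fst s.1) + inr (a.1 • snd s.1)
        apply TrivSqZeroExt.ext
        · rw [fst_mul, fst_inl, fst_add, fst_inl, fst_inr, add_zero]
        · rw [snd_mul, snd_inl, fst_inl, snd_add, snd_inl, snd_inr, zero_add, smul_zero,
            add_zero]
      rw [e1, TensorProduct.tmul_add, h0 (a.1 • snd s.1), add_zero]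
      rfl
  let eqv : B ≃ₗ[A0] A0 ⊗[R] S :=
    LinearEquiv.ofLinear G F.toLinearMap (LinearMap.ext hGF) (LinearMap.ext hFG)
  exact Module.Flat.of_linearEquiv eqv

set_option synthInstance.maxHeartbeats 1000000 in
set_option maxHeartbeats 1000000000 in
theorem aux_flat_comap (R : Subring (TrivSqZeroExt (FractionRing A) E))
    (hR : ∀ x, x ∈ R ↔ fst x ∈ (algebraMap A (FractionRing A)).range)
    (B : Subring (FractionRing A)) (hb : (algebraMap A (FractionRing A)).range ≤ B)
    (hf : letI := (Subring.inclusion hb).toAlgebra;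
      Module.Flat (algebraMap A (FractionRing A)).range B)
    (hs : R ≤ Subring.comap (fstRingHom (FractionRing A) E) B) :
    letI := (Subring.inclusion hs).toAlgebra;
    Module.Flat R (Subring.comap (fstRingHom (FractionRing A) E) B) := by
  set K := FractionRing A with hK
  set A0 := (algebraMap A K).range with hA0
  letI : Algebra A0 B := (Subring.inclusion hb).toAlgebra
  haveI flatB : Module.Flat A0 B := hf
  set S := Subring.comap (fstRingHom K E) B with hSdef
  letI : Algebra R S := (Subring.inclusion hs).toAlgebra
  let sigma : A0 →+* R := ((inlHom K E).comp A0.subtype).codRestrict R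
      (fun a => (hR _).mpr (by
        show fst (inl a.1 : TrivSqZeroExt K E) ∈ A0; rw [fst_inl]; exact a.2))
  letI : Algebra A0 R := sigma.toAlgebra
  letI : Algebra A0 S := ((Subring.inclusion hs).comp sigma).toAlgebra
  haveI : IsScalarTower A0 R S := IsScalarTower.of_algebraMap_eq (fun a => rfl)
  let g : B →ₐ[A0] S :=
    { toRingHom := ((inlHom K E).comp B.subtype).codRestrict S
        (fun b => Subring.mem_comap.mpr (by
          show fst (inl b.1 : TrivSqZeroExt K E) ∈ B; rw [fst_inl]; exact b.2))
      commutes' := fun a => rfl }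
  let f : R →ₐ[R] S := Algebra.ofId R S
  let F : (R ⊗[A0] B) →ₐ[R] S := Algebra.TensorProduct.lift f g (fun x y => Commute.all _ _)
  have key : ∀ (e : E) (b : B),
      ((⟨inr e, aux_inr_mem A E R hR e⟩ : R) ⊗ₜ[A0] b : R ⊗[A0] B)
        = (⟨inr (b.1 • e), aux_inr_mem A E R hR (b.1 • e)⟩ : R) ⊗ₜ[A0] (1 : B) := by
    intro e b
    obtain ⟨⟨a, t⟩, hmk⟩ := IsLocalization.mk'_surjective (nonZeroDivisors A) b.1
    have hspec : b.1 * algebraMap A K t = algebraMap A K a := by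
      rw [← hmk]; exact IsLocalization.mk'_spec K a t
    obtain ⟨u, hu⟩ := IsLocalization.map_units K t
    set sA : A0 := ⟨algebraMap A K t, RingHom.mem_range.mpr ⟨t, rfl⟩⟩ with hsA
    set aA : A0 := ⟨algebraMap A K a, RingHom.mem_range.mpr ⟨a, rfl⟩⟩ with haA
    have h11 : (⟨inr e, aux_inr_mem A E R hR e⟩ : R)
        = sA • (⟨inr ((↑u⁻¹ : K) • e), aux_inr_mem A E R hR ((↑u⁻¹ : K) • e)⟩ : R) := by
      apply Subtype.ext
      rw [Algebra.smul_def]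
      show (inr e : TrivSqZeroExt K E) = inl (algebraMap A K t) * inr ((↑u⁻¹ : K) • e)
      rw [inl_mul_inr, smul_smul, ← hu, Units.mul_inv, one_smul]
    have h12 : sA • b = aA • (1 : B) := by
      apply Subtype.ext
      rw [Algebra.smul_def, Algebra.smul_def]
      show algebraMap A K t * b.1 = algebraMap A K a * 1
      rw [mul_one, mul_comm]
      exact hspec
    have h13 : aA • (⟨inr ((↑u⁻¹ : K) • e), aux_inr_mem A E R hR ((↑u⁻¹ : K) • e)⟩ : R)
        = (⟨inr (b.1 • e), aux_inr_mem A E R hR (b.1 • e)⟩ : R) := by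
      apply Subtype.ext
      rw [Algebra.smul_def]
      show inl (algebraMap A K a) * inr ((↑u⁻¹ : K) • e) = (inr (b.1 • e) : TrivSqZeroExt K E)
      rw [inl_mul_inr, smul_smul]
      have hba : algebraMap A K a * (↑u⁻¹ : K) = b.1 := by
        rw [← hspec, ← hu, mul_assoc, Units.mul_inv, mul_one]
      rw [hba]
    rw [h11, TensorProduct.smul_tmul, h12, ← TensorProduct.smul_tmul, h13]
  have hsplit : ∀ (r : R) (b : B), (r ⊗ₜ[A0] b : R ⊗[A0] B)
      = (⟨inr (b.1 • snd r.1), aux_inr_mem A E R hR (b.1 • snd r.1)⟩ : R) ⊗ₜ[A0] (1 : B)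
        + (1 : R) ⊗ₜ[A0] (⟨fst r.1 * b.1, B.mul_mem (hb ((hR r.1).mp r.2)) b.2⟩ : B) := by
    intro r b
    set aR : A0 := ⟨fst r.1, (hR r.1).mp r.2⟩ with haR
    set rl : R := ⟨inl (fst r.1), (hR _).mpr (by rw [fst_inl]; exact (hR r.1).mp r.2)⟩ with hrl
    set rr : R := ⟨inr (snd r.1), aux_inr_mem A E R hR (snd r.1)⟩ with hrr
    have hr : r = rl + rr := Subtype.ext (inl_fst_add_inr_snd_eq r.1).symm
    have ha : rl = aR • (1 : R) := by
      apply Subtype.ext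
      rw [Algebra.smul_def]
      show inl (fst r.1) = (inl (fst r.1) : TrivSqZeroExt K E) * 1
      rw [mul_one]
    have hab : aR • b = (⟨fst r.1 * b.1, B.mul_mem (hb ((hR r.1).mp r.2)) b.2⟩ : B) := by
      apply Subtype.ext
      rw [Algebra.smul_def]
      rfl
    calc r ⊗ₜ[A0] b
        = (rl + rr) ⊗ₜ[A0] b := by rw [← hr]
      _ = rl ⊗ₜ[A0] b + rr ⊗ₜ[A0] b := TensorProduct.add_tmul _ _ _
      _ = (aR • (1 : R)) ⊗ₜ[A0] b + rr ⊗ₜ[A0] b := by rw [← ha]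
      _ = (1 : R) ⊗ₜ[A0] (aR • b) + rr ⊗ₜ[A0] b := by rw [TensorProduct.smul_tmul]
      _ = (1 : R) ⊗ₜ[A0] (⟨fst r.1 * b.1, B.mul_mem (hb ((hR r.1).mp r.2)) b.2⟩ : B)
            + (⟨inr (b.1 • snd r.1), aux_inr_mem A E R hR (b.1 • snd r.1)⟩ : R) ⊗ₜ[A0] (1 : B) := by
          rw [hab, key]
      _ = _ := add_comm _ _
  let G : S →ₗ[R] R ⊗[A0] B :=
    { toFun := fun s => (⟨inr (snd s.1), aux_inr_mem A E R hR (snd s.1)⟩ : R) ⊗ₜ[A0] (1 : B)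
        + (1 : R) ⊗ₜ[A0] (⟨fst s.1, Subring.mem_comap.mp s.2⟩ : B)
      map_add' := by
        intro x y
        have e1 : (⟨inr (snd (x.1 + y.1)), aux_inr_mem A E R hR (snd (x.1 + y.1))⟩ : R)
            = ⟨inr (snd x.1), aux_inr_mem A E R hR (snd x.1)⟩
              + ⟨inr (snd y.1), aux_inr_mem A E R hR (snd y.1)⟩ := by
          apply Subtype.ext
          show (inr (snd (x.1 + y.1)) : TrivSqZeroExt K E) = inr (snd x.1) + inr (snd y.1)
          rw [snd_add, inr_add]
        have e2 : (⟨fst (x.1 + y.1), Subring.mem_comap.mp (x + y).2⟩ : B)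
            = ⟨fst x.1, Subring.mem_comap.mp x.2⟩ + ⟨fst y.1, Subring.mem_comap.mp y.2⟩ := by
          apply Subtype.ext
          show fst (x.1 + y.1) = fst x.1 + fst y.1
          rw [fst_add]
        show (⟨inr (snd (x.1 + y.1)), aux_inr_mem A E R hR (snd (x.1 + y.1))⟩ : R) ⊗ₜ[A0] (1 : B)
            + (1 : R) ⊗ₜ[A0] (⟨fst (x.1 + y.1), Subring.mem_comap.mp (x + y).2⟩ : B)
            = ((⟨inr (snd x.1), aux_inr_mem A E R hR (snd x.1)⟩ : R) ⊗ₜ[A0] (1 : B)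
                + (1 : R) ⊗ₜ[A0] (⟨fst x.1, Subring.mem_comap.mp x.2⟩ : B))
              + ((⟨inr (snd y.1), aux_inr_mem A E R hR (snd y.1)⟩ : R) ⊗ₜ[A0] (1 : B)
                + (1 : R) ⊗ₜ[A0] (⟨fst y.1, Subring.mem_comap.mp y.2⟩ : B))
        rw [e1, e2, TensorProduct.add_tmul, TensorProduct.tmul_add]
        exact add_add_add_comm _ _ _ _
      map_smul' := by
        intro r s
        dsimp only [RingHom.id_apply]
        have hr1 : r • (⟨inr (snd s.1), aux_inr_mem A E R hR (snd s.1)⟩ : R)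
            = ⟨inr (fst r.1 • snd s.1), aux_inr_mem A E R hR (fst r.1 • snd s.1)⟩ := by
          apply Subtype.ext
          show r.1 * (inr (snd s.1) : TrivSqZeroExt K E) = inr (fst r.1 • snd s.1)
          apply TrivSqZeroExt.ext
          · rw [fst_mul, fst_inr, mul_zero, fst_inr]
          · rw [snd_mul, snd_inr, fst_inr, MulOpposite.op_zero, zero_smul, add_zero, snd_inr]
        have hr2 : r • (1 : R) = r := by rw [smul_eq_mul, mul_one]
        have hsnd : (⟨inr (snd (r.1 * s.1)), aux_inr_mem A E R hR (snd (r.1 * s.1))⟩ : R)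
            = ⟨inr (fst r.1 • snd s.1), aux_inr_mem A E R hR (fst r.1 • snd s.1)⟩
              + ⟨inr (fst s.1 • snd r.1), aux_inr_mem A E R hR (fst s.1 • snd r.1)⟩ := by
          apply Subtype.ext
          show (inr (snd (r.1 * s.1)) : TrivSqZeroExt K E) = _
          rw [snd_mul, op_smul_eq_smul, inr_add]
          rfl
        have hfst : (⟨fst (r.1 * s.1), Subring.mem_comap.mp (r • s).2⟩ : B)
            = ⟨fst r.1 * fst s.1,
                B.mul_mem (hb ((hR r.1).mp r.2)) (Subring.mem_comap.mp s.2)⟩ := by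
          apply Subtype.ext
          show fst (r.1 * s.1) = fst r.1 * fst s.1
          rw [fst_mul]
        show (⟨inr (snd (r.1 * s.1)), aux_inr_mem A E R hR (snd (r.1 * s.1))⟩ : R) ⊗ₜ[A0] (1 : B)
            + (1 : R) ⊗ₜ[A0] (⟨fst (r.1 * s.1), Subring.mem_comap.mp (r • s).2⟩ : B)
            = r • ((⟨inr (snd s.1), aux_inr_mem A E R hR (snd s.1)⟩ : R) ⊗ₜ[A0] (1 : B)
                + (1 : R) ⊗ₜ[A0] (⟨fst s.1, Subring.mem_comap.mp s.2⟩ : B))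
        rw [smul_add, TensorProduct.smul_tmul', TensorProduct.smul_tmul', hr1, hr2,
          hsplit r (⟨fst s.1, Subring.mem_comap.mp s.2⟩ : B), hsnd, hfst,
          TensorProduct.add_tmul]
        abel }
  have hFG : ∀ s : S, F (G s) = s := by
    intro s
    show F ((⟨inr (snd s.1), aux_inr_mem A E R hR (snd s.1)⟩ : R) ⊗ₜ[A0] (1 : B)
        + (1 : R) ⊗ₜ[A0] (⟨fst s.1, Subring.mem_comap.mp s.2⟩ : B)) = s
    rw [show F = Algebra.TensorProduct.lift f g (fun x y => Commute.all _ _) from rfl]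
    rw [map_add, Algebra.TensorProduct.lift_tmul, Algebra.TensorProduct.lift_tmul,
      map_one, map_one, mul_one, one_mul]
    apply Subtype.ext
    show (inr (snd s.1) : TrivSqZeroExt K E) + inl (fst s.1) = s.1
    rw [add_comm]
    exact inl_fst_add_inr_snd_eq s.1
  have hGF : ∀ z : R ⊗[A0] B, G (F z) = z := by
    intro z
    induction z using TensorProduct.induction_on with
    | zero => simp
    | add x y hx hy => rw [map_add, map_add, hx, hy]
    | tmul r b =>
      rw [show F = Algebra.TensorProduct.lift f g (fun x y => Commute.all _ _) from rfl]
      rw [Algebra.TensorProduct.lift_tmul, hsplit r b]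
      have c1 : (⟨inr (snd ((f r * g b : S)).1), aux_inr_mem A E R hR (snd ((f r * g b : S)).1)⟩ : R)
          = ⟨inr (b.1 • snd r.1), aux_inr_mem A E R hR (b.1 • snd r.1)⟩ := by
        apply Subtype.ext
        show (inr (snd (r.1 * (inl b.1 : TrivSqZeroExt K E))) : TrivSqZeroExt K E)
            = inr (b.1 • snd r.1)
        rw [snd_mul, fst_inl, snd_inl, smul_zero, zero_add, op_smul_eq_smul]
      have c2 : (⟨fst ((f r * g b : S)).1, Subring.mem_comap.mp (f r * g b).2⟩ : B)
          = ⟨fst r.1 * b.1, B.mul_mem (hb ((hR r.1).mp r.2)) b.2⟩ := by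
        apply Subtype.ext
        show fst (r.1 * (inl b.1 : TrivSqZeroExt K E)) = fst r.1 * b.1
        rw [fst_mul, fst_inl]
      exact congrArg₂ (· + ·)
        (congrArg (fun x : R => (x ⊗ₜ[A0] (1 : B) : R ⊗[A0] B)) c1)
        (congrArg (fun y : B => ((1 : R) ⊗ₜ[A0] y : R ⊗[A0] B)) c2)
  let eqv : S ≃ₗ[R] R ⊗[A0] B :=
    LinearEquiv.ofLinear G F.toLinearMap (LinearMap.ext hGF) (LinearMap.ext hFG)
  exact Module.Flat.of_linearEquiv eqv

end Aux

set_option synthInstance.maxHeartbeats 1000000 in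
set_option maxHeartbeats 2000000 in
/-- For `R = A ⋉ E` with `E` a `Tot(A)`-module: every flat overring of `R` is well-centered
on `R` iff every flat overring of `A` is well-centered on `A`. -/
theorem trivial_extension_flat_wellCentered_iff
    (A : Type*) [CommRing A] (E : Type*) [AddCommGroup E] [Module (FractionRing A) E]
    (R : Subring (TrivSqZeroExt (FractionRing A) E))
    (hR : ∀ x, x ∈ R ↔ fst x ∈ (algebraMap A (FractionRing A)).range) :
    (∀ (S : Subring (TrivSqZeroExt (FractionRing A) E)) (h : R ≤ S),
        (letI := (Subring.inclusion h).toAlgebra; Module.Flat R S) → WellCentered R S) ↔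
    (∀ (B : Subring (FractionRing A)) (h : (algebraMap A (FractionRing A)).range ≤ B),
        (letI := (Subring.inclusion h).toAlgebra;
          Module.Flat (algebraMap A (FractionRing A)).range B) →
        WellCentered (algebraMap A (FractionRing A)).range B) := by
  constructor
  · intro H B hb hf
    set S := Subring.comap (fstRingHom (FractionRing A) E) B with hS
    have hs : R ≤ S := fun x hx => by
      rw [hS, Subring.mem_comap]
      exact hb ((hR x).mp hx)
    have wc := H S hs (aux_flat_comap A E R hR B hb hf hs)
    intro b hbB
    obtain ⟨u, huS, ⟨v, hvS, huv⟩, hmem⟩ := wc (inl b)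
      (by rw [hS, Subring.mem_comap]; show fst (inl b : TrivSqZeroExt (FractionRing A) E) ∈ B; rwa [fst_inl])
    refine ⟨fst u, ?_, ⟨fst v, ?_, ?_⟩, ?_⟩
    · exact (Subring.mem_comap.mp huS : (fstRingHom (FractionRing A) E) u ∈ B)
    · exact (Subring.mem_comap.mp hvS : (fstRingHom (FractionRing A) E) v ∈ B)
    · have h4 : fst (u * v) = fst u * fst v := fst_mul u v
      rw [huv] at h4
      rw [show fst (1 : TrivSqZeroExt (FractionRing A) E) = 1 from fst_one (R := FractionRing A) (M := E)] at h4
      exact h4.symm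
    · have := (hR (u * inl b)).mp hmem
      rwa [fst_mul, fst_inl] at this
  · intro H S hs hf
    set B := S.map (fstRingHom (FractionRing A) E) with hB
    have hb : (algebraMap A (FractionRing A)).range ≤ B := fun a ha => by
      have h1 : (inl a : TrivSqZeroExt (FractionRing A) E) ∈ R := (hR _).mpr (by rwa [fst_inl])
      exact ⟨inl a, hs h1, fst_inl E a⟩
    have wc := H B hb (aux_flat_map A E R S hR hs hf hb)
    intro x hxS
    obtain ⟨u, huB, ⟨v, hvB, huv⟩, hmem⟩ := wc (fst x) ⟨x, hxS, rfl⟩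
    refine ⟨inl u, aux_inl_mem A E hR hs huB, ⟨inl v, aux_inl_mem A E hR hs hvB, ?_⟩, ?_⟩
    · rw [inl_mul_inl, huv, inl_one]
    · exact (hR _).mpr (by rw [fst_mul, fst_inl]; exact hmem)
end

section
/- Let V be a valuation domain that is not a field, L its quotient field, E a nonzero L-vector space, and R = V ⋉ E the trivial extension. Then R is not a coherent ring: for 0 ≠ e ∈ E, the annihilator of (0,e) in R equals 0 ⋉ E, which is not a finitely generated ideal of R. -/
open TrivSqZeroExt

/-- A ring is coherent if every finitely generated ideal is finitely presented. -/
def IsCoherentRing (R : Type*) [CommRing R] : Prop :=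
  ∀ I : Ideal R, I.FG → Module.FinitePresentation R I

/-- Let `V` be a valuation domain which is not a field, `L = qf(V)`, `E` a nonzero
`L`-vector space, and `R = V ⋉ E`.  Then the annihilator of `(0,e)` (for `0 ≠ e ∈ E`) is the
ideal `0 ⋉ E = ker(fst)`, which is not finitely generated, and `R` is not coherent. -/
theorem trivial_extension_of_valuation_domain_not_coherent
    (V : Type*) [CommRing V] [IsDomain V] [ValuationRing V] (hV : ¬ IsField V)
    (E : Type*) [AddCommGroup E] [Module V E]
    [Module (FractionRing V) E] [IsScalarTower V (FractionRing V) E]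
    (hE : ∃ e : E, e ≠ 0) :
    (∀ e : E, e ≠ 0 →
      (∀ x : TrivSqZeroExt V E, x * inr e = 0 ↔ x ∈ RingHom.ker (fstRingHom V E))) ∧
    ¬ (RingHom.ker (fstRingHom V E)).FG ∧
    ¬ IsCoherentRing (TrivSqZeroExt V E) := by
  classical
  set L := FractionRing V
  -- part 1
  have key : ∀ e : E, e ≠ 0 →
      (∀ x : TrivSqZeroExt V E, x * inr e = 0 ↔ x ∈ RingHom.ker (fstRingHom V E)) := by
    intro e he x
    rw [RingHom.mem_ker]
    have hfst : (fstRingHom V E) x = fst x := rfl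
    rw [hfst]
    constructor
    · intro h
      by_contra hx
      have h2 : snd (x * inr e) = 0 := by rw [h]; rfl
      rw [snd_mul, snd_inr, fst_inr, MulOpposite.op_zero, zero_smul, add_zero] at h2
      have : (algebraMap V L (fst x)) • e = 0 := by
        rwa [algebraMap_smul]
      have hne : algebraMap V L (fst x) ≠ 0 := fun h =>
        hx (IsFractionRing.injective V L (by simpa using h))
      exact he ((smul_eq_zero.mp this).resolve_left hne)
    · intro h
      ext
      · simp [h]
      · rw [snd_mul, snd_inr, fst_inr, MulOpposite.op_zero, zero_smul, add_zero, h,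
          zero_smul, snd_zero]
  -- part 2
  have notfg : ¬ (RingHom.ker (fstRingHom V E)).FG := by
    rintro ⟨s, hs⟩
    -- E is then finitely generated over V
    have hmem : ∀ x : TrivSqZeroExt V E, x ∈ RingHom.ker (fstRingHom V E) ↔ fst x = 0 := by
      intro x; rw [RingHom.mem_ker]; rfl
    set N : Submodule V E := Submodule.span V (↑(s.image snd) : Set E) with hN
    have hsnd : ∀ y ∈ Ideal.span (↑s : Set (TrivSqZeroExt V E)), snd y ∈ N := by
      intro y hy
      refine Submodule.span_induction ?_ ?_ ?_ ?_ hy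
      · intro x hx
        exact Submodule.subset_span (by simpa using Finset.mem_image_of_mem snd hx)
      · simp
      · intro a b _ _ ha hb
        rw [snd_add]; exact N.add_mem ha hb
      · intro r x hx hsx
        have hx0 : fst x = 0 := by
          rw [← hmem, ← hs]
          exact hx
        have : snd (r • x) = fst r • snd x := by
          rw [smul_eq_mul, snd_mul, hx0, MulOpposite.op_zero, zero_smul, add_zero]
        rw [this]
        exact N.smul_mem _ hsx
    have htop : (⊤ : Submodule V E) = N := by
      refine le_antisymm (fun m _ => ?_) le_top
      have : (inr m : TrivSqZeroExt V E) ∈ Ideal.span (↑s : Set (TrivSqZeroExt V E)) := by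
        rw [hs, hmem, fst_inr]
      simpa using hsnd _ this
    -- Nakayama
    obtain ⟨t, ht0, htu⟩ := Ring.exists_not_isUnit_of_not_isField hV
    have hjac : Ideal.span {t} ≤ Ideal.jacobson (⊥ : Ideal V) := by
      rw [IsLocalRing.jacobson_eq_maximalIdeal (⊥ : Ideal V) bot_ne_top]
      rw [Ideal.span_le, Set.singleton_subset_iff]
      exact htu
    have hle : (⊤ : Submodule V E) ≤ Ideal.span {t} • (⊤ : Submodule V E) := by
      intro m _
      have htL : algebraMap V L t ≠ 0 := fun h => ht0 (IsFractionRing.injective V L (by simpa using h))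
      have : m = t • ((algebraMap V L t)⁻¹ • m) := by
        rw [← algebraMap_smul L t, smul_smul, mul_inv_cancel₀ htL, one_smul]
      rw [this]
      exact Submodule.smul_mem_smul (Ideal.mem_span_singleton_self t) trivial
    have hbot := Submodule.eq_bot_of_le_smul_of_le_jacobson_bot (Ideal.span {t})
      (⊤ : Submodule V E) (htop ▸ ⟨s.image snd, rfl⟩) hle hjac
    obtain ⟨e, he⟩ := hE
    have : e ∈ (⊥ : Submodule V E) := by rw [← hbot]; trivial
    exact he (by simpa using this)
  refine ⟨key, notfg, ?_⟩
  -- part 3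
  intro hcoh
  obtain ⟨e, he⟩ := hE
  set I : Ideal (TrivSqZeroExt V E) := Ideal.span {inr e} with hI
  have hIfg : I.FG := ⟨{inr e}, by simp [hI]⟩
  have hfp := hcoh I hIfg
  have hmemI : (inr e : TrivSqZeroExt V E) ∈ I := Ideal.mem_span_singleton_self _
  set f : TrivSqZeroExt V E →ₗ[TrivSqZeroExt V E] I :=
    LinearMap.toSpanSingleton (TrivSqZeroExt V E) I ⟨inr e, hmemI⟩ with hf
  have hsurj : Function.Surjective f := by
    rintro ⟨x, hx⟩
    obtain ⟨a, ha⟩ := Ideal.mem_span_singleton'.mp hx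
    exact ⟨a, Subtype.ext (by simpa [hf, LinearMap.toSpanSingleton_apply] using ha)⟩
  have hker := Module.FinitePresentation.fg_ker (h := hfp) f hsurj
  have : LinearMap.ker f = Submodule.restrictScalars (TrivSqZeroExt V E)
      (RingHom.ker (fstRingHom V E)) := by
    ext x
    rw [LinearMap.mem_ker]
    have : f x = ⟨x * inr e, I.mul_mem_left x hmemI⟩ :=
      Subtype.ext (by simp [hf, LinearMap.toSpanSingleton_apply, smul_eq_mul])
    rw [this]
    simpa [Subtype.ext_iff] using key e he x
  rw [this] at hker
  exact notfg hker
end
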